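/- arXiv:2104.02169 — 3 statements merged into one kernel-verified Lean document; each statement's English description precedes it below -/
import Mathlib

section
/- Hydrodynamic moments of the transport term of the first Hilbert correction: let ρ, θ : U → ℝ and u : U → ℝ³ be differentiable at a point x of an open set U ⊂ ℝ³, and let f₁(x,v) = (ρ(x) + u(x)·v + θ(x)(|v|²−3)/2) √μ(v). Then (i) ∫_{ℝ³} (v·∇ₓ f₁)(x,v) √μ(v) dv = (∇·u)(x); (ii) ∫_{ℝ³} (v·∇ₓ f₁)(x,v) v_i √μ(v) dv = ∂_{x_i}(ρ + θ)(x) for each i = 1,2,3; (iii) ∫_{ℝ³} (v·∇ₓ f₁)(x,v) (|v|²/2) √μ(v) dv = (5/2)(∇·u)(x). -/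
open MeasureTheory Real
open scoped RealInnerProductSpace

noncomputable section

/-- The global Maxwellian `μ(v) = (2π)^{−3/2} e^{−|v|²/2}`. -/
def globalMaxwellian (v : EuclideanSpace ℝ (Fin 3)) : ℝ :=
  (2 * Real.pi) ^ (-(3 : ℝ) / 2) * Real.exp (-‖v‖ ^ 2 / 2)

/-- The first-order Hilbert correction
`f₁(x,v) = (ρ(x) + u(x)·v + θ(x)(|v|²−3)/2) √μ(v)`. -/
def hilbertFirst (ρ θ : EuclideanSpace ℝ (Fin 3) → ℝ)
    (u : EuclideanSpace ℝ (Fin 3) → EuclideanSpace ℝ (Fin 3))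
    (x v : EuclideanSpace ℝ (Fin 3)) : ℝ :=
  (ρ x + ⟪u x, v⟫ + θ x * (‖v‖ ^ 2 - 3) / 2) * Real.sqrt (globalMaxwellian v)

/-- 1D Gaussian moment -/
def gmom (k : ℕ) : ℝ := ∫ t : ℝ, t ^ k * Real.exp (-t ^ 2 / 2)

lemma integrable_gmom (k : ℕ) :
    Integrable (fun t : ℝ => t ^ k * Real.exp (-t ^ 2 / 2)) := by
  have h := integrable_rpow_mul_exp_neg_mul_sq (b := 1/2) (by norm_num) (s := (k : ℝ))
    (by exact_mod_cast neg_one_lt_zero.trans_le (Nat.cast_nonneg k))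
  refine h.congr (Filter.Eventually.of_forall fun t => ?_)
  simp only [Real.rpow_natCast]
  ring_nf

lemma gmom_zero : gmom 0 = Real.sqrt (2 * π) := by
  have h := integral_gaussian (1/2 : ℝ)
  simp only [gmom, pow_zero, one_mul]
  rw [show (2 : ℝ) * π = π / (1/2) by ring, ← h]
  congr 1 with t
  ring_nf

lemma gmom_succ_succ (k : ℕ) : gmom (k + 2) = (k + 1) * gmom k := by
  have hd : ∀ t : ℝ, HasDerivAt (fun s : ℝ => s ^ (k+1) * Real.exp (-s ^ 2 / 2))
      ((k+1) * t ^ k * Real.exp (-t ^ 2 / 2) - t ^ (k+2) * Real.exp (-t ^ 2 / 2)) t := by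
    intro t
    have h1 : HasDerivAt (fun s : ℝ => s ^ (k+1)) ((k+1) * t ^ k) t := by
      simpa using hasDerivAt_pow (k+1) t
    have h2 : HasDerivAt (fun s : ℝ => Real.exp (-s ^ 2 / 2)) (-t * Real.exp (-t ^ 2 / 2)) t := by
      have hi : HasDerivAt (fun s : ℝ => -s ^ 2 / 2) (-t) t := by
        have := (hasDerivAt_pow 2 t).neg.div_const 2
        simpa using this.congr_deriv (by ring)
      simpa [mul_comm] using hi.exp
    have := h1.fun_mul h2
    exact this.congr_deriv (by ring)
  have hint : Integrable (fun t : ℝ =>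
      (k+1) * t ^ k * Real.exp (-t ^ 2 / 2) - t ^ (k+2) * Real.exp (-t ^ 2 / 2)) := by
    exact (((integrable_gmom k).const_mul ((k:ℝ)+1)).congr (Filter.Eventually.of_forall fun t => by ring)).sub (integrable_gmom (k+2))
  have h0 := integral_eq_zero_of_hasDerivAt_of_integrable hd hint (integrable_gmom (k+1))
  rw [integral_sub (((integrable_gmom k).const_mul ((k:ℝ)+1)).congr (Filter.Eventually.of_forall fun t => by ring)) (integrable_gmom (k+2))] at h0
  have : ∫ t : ℝ, (k+1) * t ^ k * Real.exp (-t^2/2) = (k+1) * gmom k := by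
    rw [gmom, ← integral_const_mul]
    congr 1 with t; ring
  rw [this] at h0
  have : gmom (k+2) = ∫ t : ℝ, t ^ (k+2) * Real.exp (-t^2/2) := rfl
  linarith [h0]

lemma gmom_one : gmom 1 = 0 := by
  have hd : ∀ t : ℝ, HasDerivAt (fun s : ℝ => Real.exp (-s ^ 2 / 2))
      (-(t * Real.exp (-t ^ 2 / 2))) t := by
    intro t
    have hi : HasDerivAt (fun s : ℝ => -s ^ 2 / 2) (-t) t := by
      have := (hasDerivAt_pow 2 t).neg.div_const 2
      simpa using this.congr_deriv (by ring)
    simpa [mul_comm] using hi.exp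
  have hint : Integrable (fun t : ℝ => -(t * Real.exp (-t ^ 2 / 2))) := by
    exact ((integrable_gmom 1).congr (Filter.Eventually.of_forall fun t => by ring)).neg
  have h0 := integral_eq_zero_of_hasDerivAt_of_integrable hd hint (integrable_gmom 0 |>.congr (Filter.Eventually.of_forall fun t => by simp))
  rw [integral_neg] at h0
  have : gmom 1 = ∫ t : ℝ, t * Real.exp (-t^2/2) := by
    simp [gmom]
  rw [this]; linarith

abbrev E3 := EuclideanSpace ℝ (Fin 3)

def g1 (t : ℝ) : ℝ := (2 * π) ^ (-(1:ℝ)/2) * Real.exp (-t ^ 2 / 2)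

lemma globalMaxwellian_eq_prod (v : E3) :
    globalMaxwellian v = g1 (v 0) * g1 (v 1) * g1 (v 2) := by
  have hnorm : ‖v‖ ^ 2 = (v 0) ^ 2 + (v 1) ^ 2 + (v 2) ^ 2 := by
    rw [EuclideanSpace.norm_eq, Real.sq_sqrt (by positivity)]
    simp [Fin.sum_univ_three]
  have hc : (2 * π) ^ (-(3:ℝ)/2) = (2*π) ^ (-(1:ℝ)/2) * (2*π) ^ (-(1:ℝ)/2) * (2*π) ^ (-(1:ℝ)/2) := by
    rw [← Real.rpow_add (by positivity), ← Real.rpow_add (by positivity)]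
    norm_num
  simp only [globalMaxwellian, g1, hnorm, hc]
  rw [show -((v 0)^2 + (v 1)^2 + (v 2)^2)/2 = -(v 0)^2/2 + (-(v 1)^2/2) + (-(v 2)^2/2) by ring,
    Real.exp_add, Real.exp_add]
  ring

lemma euclid_integral_eq (F : E3 → ℝ) :
    ∫ v : E3, F v = ∫ w : Fin 3 → ℝ, F ((MeasurableEquiv.toLp 2 (Fin 3 → ℝ)) w) :=
  (((EuclideanSpace.volume_preserving_symm_measurableEquiv_toLp (Fin 3)).symm (MeasurableEquiv.toLp 2 (Fin 3 → ℝ)).symm).integral_comp' F).symm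

lemma euclid_integrable_iff (F : E3 → ℝ) :
    Integrable F ↔ Integrable (fun w : Fin 3 → ℝ => F ((MeasurableEquiv.toLp 2 (Fin 3 → ℝ)) w)) := by
  rw [← ((EuclideanSpace.volume_preserving_symm_measurableEquiv_toLp (Fin 3)).symm (MeasurableEquiv.toLp 2 (Fin 3 → ℝ)).symm).integrable_comp_emb
    (MeasurableEquiv.measurableEmbedding _)]
  rfl

example (w : Fin 3 → ℝ) (i : Fin 3) : ((MeasurableEquiv.toLp 2 (Fin 3 → ℝ)) w) i = w i := rfl

def gnorm (k : ℕ) : ℝ := (2 * π) ^ (-(1:ℝ)/2) * gmom k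

lemma g1_mom_eq (k : ℕ) : (fun t : ℝ => t ^ k * g1 t)
    = fun t => (2 * π) ^ (-(1:ℝ)/2) * (t ^ k * Real.exp (-t ^ 2 / 2)) :=
  funext fun t => by unfold g1; ring

lemma integral_g1_mom (k : ℕ) : ∫ t : ℝ, t ^ k * g1 t = gnorm k := by
  rw [g1_mom_eq, integral_const_mul]; rfl

lemma integrable_g1_mom (k : ℕ) : Integrable (fun t : ℝ => t ^ k * g1 t) := by
  rw [g1_mom_eq]
  exact (integrable_gmom k).const_mul _

lemma integral_monomial (k : Fin 3 → ℕ) :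
    ∫ v : E3, (v 0) ^ (k 0) * (v 1) ^ (k 1) * (v 2) ^ (k 2) * globalMaxwellian v
      = gnorm (k 0) * gnorm (k 1) * gnorm (k 2) := by
  rw [euclid_integral_eq]
  have : ∀ w : Fin 3 → ℝ,
      (fun v : E3 => (v 0) ^ (k 0) * (v 1) ^ (k 1) * (v 2) ^ (k 2) * globalMaxwellian v)
        ((MeasurableEquiv.toLp 2 (Fin 3 → ℝ)) w)
      = ∏ i, (w i) ^ (k i) * g1 (w i) := by
    intro w
    show (w 0) ^ (k 0) * (w 1) ^ (k 1) * (w 2) ^ (k 2)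
        * globalMaxwellian ((MeasurableEquiv.toLp 2 (Fin 3 → ℝ)) w) = _
    rw [globalMaxwellian_eq_prod, Fin.prod_univ_three]
    show _ = (w 0) ^ (k 0) * g1 (w 0) * ((w 1) ^ (k 1) * g1 (w 1)) * ((w 2) ^ (k 2) * g1 (w 2))
    have he : ∀ i : Fin 3, (MeasurableEquiv.toLp 2 (Fin 3 → ℝ)) w i = w i := fun _ => rfl
    simp only [he]
    ring
  simp_rw [this]
  rw [volume_pi, MeasureTheory.integral_fintype_prod_eq_prod (f := fun i t => t ^ (k i) * g1 t),
    Fin.prod_univ_three]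
  simp [integral_g1_mom]

lemma integrable_monomial (k : Fin 3 → ℕ) :
    Integrable (fun v : E3 =>
      (v 0) ^ (k 0) * (v 1) ^ (k 1) * (v 2) ^ (k 2) * globalMaxwellian v) := by
  rw [euclid_integrable_iff]
  have : (fun w : Fin 3 → ℝ =>
      (fun v : E3 => (v 0) ^ (k 0) * (v 1) ^ (k 1) * (v 2) ^ (k 2) * globalMaxwellian v)
        ((MeasurableEquiv.toLp 2 (Fin 3 → ℝ)) w))
      = fun w => ∏ i, (w i) ^ (k i) * g1 (w i) := by
    funext w
    show (w 0) ^ (k 0) * (w 1) ^ (k 1) * (w 2) ^ (k 2)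
        * globalMaxwellian ((MeasurableEquiv.toLp 2 (Fin 3 → ℝ)) w) = _
    rw [globalMaxwellian_eq_prod, Fin.prod_univ_three]
    show _ = (w 0) ^ (k 0) * g1 (w 0) * ((w 1) ^ (k 1) * g1 (w 1)) * ((w 2) ^ (k 2) * g1 (w 2))
    have he : ∀ i : Fin 3, (MeasurableEquiv.toLp 2 (Fin 3 → ℝ)) w i = w i := fun _ => rfl
    simp only [he]
    ring
  rw [this]
  exact Integrable.fintype_prod (fun i => integrable_g1_mom (k i))

lemma gnorm_zero : gnorm 0 = 1 := by
  rw [gnorm, gmom_zero, Real.sqrt_eq_rpow, ← Real.rpow_add (by positivity)]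
  norm_num

lemma gnorm_one : gnorm 1 = 0 := by rw [gnorm, gmom_one, mul_zero]
lemma gnorm_two : gnorm 2 = 1 := by
  have h := gmom_succ_succ 0
  rw [gnorm, h]; push_cast; rw [zero_add, one_mul]; exact gnorm_zero
lemma gnorm_three : gnorm 3 = 0 := by
  have := gmom_succ_succ 1
  rw [gnorm, this, gmom_one]; ring
lemma gnorm_four : gnorm 4 = 3 := by
  have := gmom_succ_succ 2
  rw [gnorm, this]
  have h2 : (2*π) ^ (-(1:ℝ)/2) * gmom 2 = 1 := gnorm_two
  push_cast
  nlinarith [h2]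
lemma gnorm_five : gnorm 5 = 0 := by
  have h3 : gmom 3 = 2 * gmom 1 := by
    have := gmom_succ_succ 1
    push_cast at this; linarith
  rw [gnorm, gmom_succ_succ 3, h3, gmom_one]; ring

-- generic product-form lemmas
lemma prod_pow_ite (v : E3) (i : Fin 3) (n : ℕ) :
    (∏ t, (v t) ^ (if i = t then n else 0)) = (v i) ^ n := by
  simp only [pow_ite, pow_zero]
  rw [Finset.prod_ite_eq]
  simp

lemma integral_monomial_prod (k : Fin 3 → ℕ) :
    ∫ v : E3, (∏ t, (v t) ^ (k t)) * globalMaxwellian v = ∏ t, gnorm (k t) := by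
  simp only [Fin.prod_univ_three]
  exact integral_monomial k

lemma integrable_monomial_prod (k : Fin 3 → ℕ) :
    Integrable (fun v : E3 => (∏ t, (v t) ^ (k t)) * globalMaxwellian v) := by
  simp only [Fin.prod_univ_three]
  exact integrable_monomial k

lemma globalMaxwellian_neg (v : E3) : globalMaxwellian (-v) = globalMaxwellian v := by
  simp [globalMaxwellian, norm_neg]

lemma integral_odd (f : E3 → ℝ) (hf : ∀ v, f (-v) = -f v) : ∫ v, f v = 0 := by
  have h : ∫ v : E3, f (-v) = ∫ v, f v := integral_neg_eq_self f volume
  simp_rw [hf, integral_neg] at h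
  linarith

lemma shape_prod (v : E3) (i j m : Fin 3) (ni nj nm : ℕ) :
    (v i) ^ ni * (v j) ^ nj * (v m) ^ nm
      = ∏ t, (v t) ^ ((if i = t then ni else 0) + (if j = t then nj else 0)
          + (if m = t then nm else 0)) := by
  simp only [pow_add, Finset.prod_mul_distrib, prod_pow_ite]

-- integrability shapes
lemma K1 (i : Fin 3) : Integrable (fun v : E3 => v i * globalMaxwellian v) := by
  have h : (fun v : E3 => v i * globalMaxwellian v)
      = fun v => (∏ t, (v t) ^ ((if i = t then 1 else 0) + (if i = t then 0 else 0)
          + (if i = t then 0 else 0))) * globalMaxwellian v := by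
    funext v; rw [← shape_prod]; ring
  rw [h]; exact integrable_monomial_prod _

lemma K2 (i j : Fin 3) : Integrable (fun v : E3 => v i * v j * globalMaxwellian v) := by
  have h : (fun v : E3 => v i * v j * globalMaxwellian v)
      = fun v => (∏ t, (v t) ^ ((if i = t then 1 else 0) + (if j = t then 1 else 0)
          + (if i = t then 0 else 0))) * globalMaxwellian v := by
    funext v; rw [← shape_prod]; ring
  rw [h]; exact integrable_monomial_prod _

lemma K3 (i j k : Fin 3) : Integrable (fun v : E3 => v i * v j * v k * globalMaxwellian v) := by
  have h : (fun v : E3 => v i * v j * v k * globalMaxwellian v)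
      = fun v => (∏ t, (v t) ^ ((if i = t then 1 else 0) + (if j = t then 1 else 0)
          + (if k = t then 1 else 0))) * globalMaxwellian v := by
    funext v; rw [← shape_prod]; ring
  rw [h]; exact integrable_monomial_prod _

lemma K4 (i j m : Fin 3) :
    Integrable (fun v : E3 => v i * v j * (v m) ^ 2 * globalMaxwellian v) := by
  have h : (fun v : E3 => v i * v j * (v m) ^ 2 * globalMaxwellian v)
      = fun v => (∏ t, (v t) ^ ((if i = t then 1 else 0) + (if j = t then 1 else 0)
          + (if m = t then 2 else 0))) * globalMaxwellian v := by
    funext v; rw [← shape_prod]; ring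
  rw [h]; exact integrable_monomial_prod _

lemma K5 (i j m : Fin 3) :
    Integrable (fun v : E3 => v i * (v j) ^ 2 * (v m) ^ 2 * globalMaxwellian v) := by
  have h : (fun v : E3 => v i * (v j) ^ 2 * (v m) ^ 2 * globalMaxwellian v)
      = fun v => (∏ t, (v t) ^ ((if i = t then 1 else 0) + (if j = t then 2 else 0)
          + (if m = t then 2 else 0))) * globalMaxwellian v := by
    funext v; rw [← shape_prod]; ring
  rw [h]; exact integrable_monomial_prod _

-- odd moments
lemma J1 (i : Fin 3) : ∫ v : E3, v i * globalMaxwellian v = 0 := by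
  refine integral_odd _ fun v => ?_
  simp [globalMaxwellian_neg]

lemma J3 (i j k : Fin 3) : ∫ v : E3, v i * v j * v k * globalMaxwellian v = 0 := by
  refine integral_odd _ fun v => ?_
  simp only [globalMaxwellian_neg, PiLp.neg_apply]
  ring

lemma J3' (i j : Fin 3) : ∫ v : E3, v i * (v j) ^ 2 * globalMaxwellian v = 0 := by
  refine integral_odd _ fun v => ?_
  simp only [globalMaxwellian_neg, PiLp.neg_apply]
  ring

lemma J5 (i j m : Fin 3) :
    ∫ v : E3, v i * (v j) ^ 2 * (v m) ^ 2 * globalMaxwellian v = 0 := by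
  refine integral_odd _ fun v => ?_
  simp only [globalMaxwellian_neg, PiLp.neg_apply]
  ring

-- even moments
lemma J2 (i j : Fin 3) :
    ∫ v : E3, v i * v j * globalMaxwellian v = if i = j then 1 else 0 := by
  have h : (fun v : E3 => v i * v j * globalMaxwellian v)
      = fun v => (∏ t, (v t) ^ ((if i = t then 1 else 0) + (if j = t then 1 else 0)
          + (if i = t then 0 else 0))) * globalMaxwellian v := by
    funext v; rw [← shape_prod]; ring
  rw [h, integral_monomial_prod]
  fin_cases i <;> fin_cases j <;>
    norm_num [Fin.prod_univ_three, Fin.ext_iff, gnorm_zero, gnorm_one, gnorm_two]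

lemma J4 (i j m : Fin 3) :
    ∫ v : E3, v i * v j * (v m) ^ 2 * globalMaxwellian v
      = if i = j then (if i = m then 3 else 1) else 0 := by
  have h : (fun v : E3 => v i * v j * (v m) ^ 2 * globalMaxwellian v)
      = fun v => (∏ t, (v t) ^ ((if i = t then 1 else 0) + (if j = t then 1 else 0)
          + (if m = t then 2 else 0))) * globalMaxwellian v := by
    funext v; rw [← shape_prod]; ring
  rw [h, integral_monomial_prod]
  fin_cases i <;> fin_cases j <;> fin_cases m <;>
    norm_num [Fin.prod_univ_three, Fin.ext_iff, gnorm_zero, gnorm_one, gnorm_two, gnorm_three, gnorm_four]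

variable {ρ θ : E3 → ℝ} {u : E3 → E3} {x : E3}

lemma fderiv_hilbert (hρ : DifferentiableAt ℝ ρ x) (hθ : DifferentiableAt ℝ θ x)
    (hu : DifferentiableAt ℝ u x) (v : E3) :
    fderiv ℝ (fun y => hilbertFirst ρ θ u y v) x v
      = (fderiv ℝ ρ x v + ⟪fderiv ℝ u x v, v⟫ + fderiv ℝ θ x v * (‖v‖ ^ 2 - 3) / 2)
        * Real.sqrt (globalMaxwellian v) := by
  have hinner : DifferentiableAt ℝ (fun y => ⟪u y, v⟫) x :=
    hu.inner ℝ (differentiableAt_const v)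
  have hg : DifferentiableAt ℝ (fun y => ρ y + ⟪u y, v⟫ + θ y * ((‖v‖ ^ 2 - 3) / 2)) x :=
    (hρ.add hinner).add (hθ.mul_const ((‖v‖ ^ 2 - 3) / 2))
  have h0 : (fun y => hilbertFirst ρ θ u y v)
      = fun y => (ρ y + ⟪u y, v⟫ + θ y * ((‖v‖ ^ 2 - 3) / 2)) * Real.sqrt (globalMaxwellian v) :=
    funext fun y => by rw [hilbertFirst, mul_div_assoc]
  rw [h0, fderiv_mul_const hg, ContinuousLinearMap.smul_apply, smul_eq_mul, mul_comm,
    mul_div_assoc]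
  congr 1
  rw [fderiv_fun_add (f := fun y => ρ y + ⟪u y, v⟫) (hρ.add hinner) (hθ.mul_const ((‖v‖ ^ 2 - 3) / 2)), ContinuousLinearMap.add_apply,
    fderiv_fun_add hρ hinner, ContinuousLinearMap.add_apply]
  congr 1
  · congr 1
    rw [fderiv_inner_apply ℝ hu (differentiableAt_const v)]
    simp
  · rw [fderiv_mul_const hθ, ContinuousLinearMap.smul_apply, smul_eq_mul, mul_comm]

lemma clm_expand (L : E3 →L[ℝ] ℝ) (v : E3) :
    L v = ∑ j, v j * L (EuclideanSpace.single j 1) := by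
  have hv : v = ∑ j, v j • EuclideanSpace.single j (1:ℝ) := by
    have h := (EuclideanSpace.basisFun (Fin 3) ℝ).sum_repr v
    simp only [EuclideanSpace.basisFun_apply, EuclideanSpace.basisFun_repr] at h
    exact h.symm
  conv_lhs => rw [hv]
  rw [map_sum]
  simp [smul_eq_mul]

lemma inner_expand (w v : E3) : ⟪w, v⟫ = ∑ i, w i * v i := by
  simp [PiLp.inner_apply, RCLike.inner_apply, map_sum]
  exact Finset.sum_congr rfl fun _ _ => mul_comm _ _

lemma clm_vec_coord (L : E3 →L[ℝ] E3) (v : E3) (i : Fin 3) :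
    L v i = ∑ j, v j * L (EuclideanSpace.single j 1) i := by
  have := clm_expand ((EuclideanSpace.proj i).comp L) v
  simpa using this

lemma norm_sq_expand (v : E3) : ‖v‖ ^ 2 = (v 0) ^ 2 + (v 1) ^ 2 + (v 2) ^ 2 := by
  rw [EuclideanSpace.norm_eq, Real.sq_sqrt (by positivity)]
  simp [Fin.sum_univ_three]

lemma globalMaxwellian_nonneg (v : E3) : 0 ≤ globalMaxwellian v := by
  unfold globalMaxwellian; positivity

lemma K3' (i j : Fin 3) :
    Integrable (fun v : E3 => v i * (v j) ^ 2 * globalMaxwellian v) := by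
  have h : (fun v : E3 => v i * (v j) ^ 2 * globalMaxwellian v)
      = fun v => (∏ t, (v t) ^ ((if i = t then 1 else 0) + (if j = t then 2 else 0)
          + (if i = t then 0 else 0))) * globalMaxwellian v := by
    funext v; rw [← shape_prod]; ring
  rw [h]; exact integrable_monomial_prod _

lemma scalar_expand (Lρ Lθ : E3 →L[ℝ] ℝ) (Lu : E3 →L[ℝ] E3) (v : E3) :
    Lρ v + ⟪Lu v, v⟫ + Lθ v * (‖v‖ ^ 2 - 3) / 2
      = (∑ j, Lρ (EuclideanSpace.single j 1) * v j)
        + (∑ p : Fin 3 × Fin 3, Lu (EuclideanSpace.single p.2 1) p.1 * (v p.1 * v p.2))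
        + (∑ p : Fin 3 × Fin 3,
            Lθ (EuclideanSpace.single p.2 1) / 2 * (v p.2 * (v p.1) ^ 2 - v p.2)) := by
  rw [clm_expand Lρ v, clm_expand Lθ v, inner_expand]
  simp only [clm_vec_coord Lu v]
  simp only [Fintype.sum_prod_type, Fin.sum_univ_three, norm_sq_expand]
  ring


/-- Hydrodynamic moments of the transport term `v·∇ₓ f₁` of the first Hilbert correction:
its moments against `√μ`, `v_i √μ`, `(|v|²/2) √μ` are `∇·u`, `∂_{x_i}(ρ+θ)`, `(5/2)∇·u`. -/
theorem hydrodynamic_moments_of_transport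
    (ρ θ : EuclideanSpace ℝ (Fin 3) → ℝ)
    (u : EuclideanSpace ℝ (Fin 3) → EuclideanSpace ℝ (Fin 3))
    (U : Set (EuclideanSpace ℝ (Fin 3))) (hU : IsOpen U)
    (x : EuclideanSpace ℝ (Fin 3)) (hx : x ∈ U)
    (hρ : DifferentiableAt ℝ ρ x) (hθ : DifferentiableAt ℝ θ x)
    (hu : DifferentiableAt ℝ u x) :
    ((∫ v : EuclideanSpace ℝ (Fin 3),
        fderiv ℝ (fun y => hilbertFirst ρ θ u y v) x v * Real.sqrt (globalMaxwellian v)) =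
      ∑ i : Fin 3, fderiv ℝ u x (EuclideanSpace.single i 1) i) ∧
    (∀ i : Fin 3,
      (∫ v : EuclideanSpace ℝ (Fin 3),
          fderiv ℝ (fun y => hilbertFirst ρ θ u y v) x v *
            (v i * Real.sqrt (globalMaxwellian v))) =
        fderiv ℝ (fun y => ρ y + θ y) x (EuclideanSpace.single i 1)) ∧
    ((∫ v : EuclideanSpace ℝ (Fin 3),
        fderiv ℝ (fun y => hilbertFirst ρ θ u y v) x v *
          (‖v‖ ^ 2 / 2 * Real.sqrt (globalMaxwellian v))) =
      5 / 2 * ∑ i : Fin 3, fderiv ℝ u x (EuclideanSpace.single i 1) i) := by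
  refine ⟨?_, ?_, ?_⟩
  · -- part (i)
    have hfun : (fun v : E3 =>
        fderiv ℝ (fun y => hilbertFirst ρ θ u y v) x v * Real.sqrt (globalMaxwellian v))
        = fun v =>
          (∑ j, fderiv ℝ ρ x (EuclideanSpace.single j 1) * (v j * globalMaxwellian v))
          + ((∑ p : Fin 3 × Fin 3, fderiv ℝ u x (EuclideanSpace.single p.2 1) p.1
                * (v p.1 * v p.2 * globalMaxwellian v))
            + (∑ p : Fin 3 × Fin 3, fderiv ℝ θ x (EuclideanSpace.single p.2 1) / 2
                * (v p.2 * (v p.1) ^ 2 * globalMaxwellian v - v p.2 * globalMaxwellian v))) := by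
      funext v
      rw [fderiv_hilbert hρ hθ hu v, scalar_expand]
      set s := Real.sqrt (globalMaxwellian v) with hs
      have hsq : s * s = globalMaxwellian v := by
        rw [hs]; exact Real.mul_self_sqrt (globalMaxwellian_nonneg v)
      rw [← hsq]
      simp only [Fintype.sum_prod_type, Fin.sum_univ_three]
      ring
    rw [hfun]
    have h1 : ∀ j : Fin 3, Integrable (fun v : E3 =>
        fderiv ℝ ρ x (EuclideanSpace.single j 1) * (v j * globalMaxwellian v)) :=
      fun j => (K1 j).const_mul _
    have h2 : ∀ p : Fin 3 × Fin 3, Integrable (fun v : E3 =>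
        fderiv ℝ u x (EuclideanSpace.single p.2 1) p.1
          * (v p.1 * v p.2 * globalMaxwellian v)) :=
      fun p => (K2 p.1 p.2).const_mul _
    have h3 : ∀ p : Fin 3 × Fin 3, Integrable (fun v : E3 =>
        fderiv ℝ θ x (EuclideanSpace.single p.2 1) / 2
          * (v p.2 * (v p.1) ^ 2 * globalMaxwellian v - v p.2 * globalMaxwellian v)) :=
      fun p => ((K3' p.2 p.1).sub (K1 p.2)).const_mul _
    have hI1 := integrable_finset_sum (μ := volume) Finset.univ (fun j _ => h1 j)
    have hI2 := integrable_finset_sum (μ := volume) Finset.univ (fun p _ => h2 p)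
    have hI3 := integrable_finset_sum (μ := volume) Finset.univ (fun p _ => h3 p)
    have hI23 : Integrable (fun v : E3 =>
        (∑ p : Fin 3 × Fin 3, fderiv ℝ u x (EuclideanSpace.single p.2 1) p.1
            * (v p.1 * v p.2 * globalMaxwellian v))
        + (∑ p : Fin 3 × Fin 3, fderiv ℝ θ x (EuclideanSpace.single p.2 1) / 2
            * (v p.2 * (v p.1) ^ 2 * globalMaxwellian v - v p.2 * globalMaxwellian v))) :=
      hI2.add hI3
    rw [integral_add hI1 hI23, integral_add hI2 hI3,
      integral_finset_sum _ (fun j _ => h1 j), integral_finset_sum _ (fun p _ => h2 p),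
      integral_finset_sum _ (fun p _ => h3 p)]
    simp_rw [integral_const_mul]
    have hv3 : ∀ p : Fin 3 × Fin 3, (∫ v : E3,
        (v p.2 * (v p.1) ^ 2 * globalMaxwellian v - v p.2 * globalMaxwellian v)) = 0 := by
      intro p
      rw [integral_sub (K3' p.2 p.1) (K1 p.2), J3' p.2 p.1, J1 p.2]
      ring
    simp only [hv3, J1, J2]
    norm_num [Fintype.sum_prod_type, Fin.sum_univ_three]
  · -- part (ii)
    intro i
    have hfun : (fun v : E3 =>
        fderiv ℝ (fun y => hilbertFirst ρ θ u y v) x v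
          * (v i * Real.sqrt (globalMaxwellian v)))
        = fun v =>
          (∑ j, fderiv ℝ ρ x (EuclideanSpace.single j 1) * (v j * v i * globalMaxwellian v))
          + ((∑ p : Fin 3 × Fin 3, fderiv ℝ u x (EuclideanSpace.single p.2 1) p.1
                * (v p.1 * v p.2 * v i * globalMaxwellian v))
            + (∑ p : Fin 3 × Fin 3, fderiv ℝ θ x (EuclideanSpace.single p.2 1) / 2
                * (v p.2 * v i * (v p.1) ^ 2 * globalMaxwellian v
                    - v p.2 * v i * globalMaxwellian v))) := by
      funext v
      rw [fderiv_hilbert hρ hθ hu v, scalar_expand]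
      set s := Real.sqrt (globalMaxwellian v) with hs
      have hsq : s * s = globalMaxwellian v := by
        rw [hs]; exact Real.mul_self_sqrt (globalMaxwellian_nonneg v)
      rw [← hsq]
      simp only [Fintype.sum_prod_type, Fin.sum_univ_three]
      ring
    rw [hfun]
    have h1 : ∀ j : Fin 3, Integrable (fun v : E3 =>
        fderiv ℝ ρ x (EuclideanSpace.single j 1) * (v j * v i * globalMaxwellian v)) :=
      fun j => (K2 j i).const_mul _
    have h2 : ∀ p : Fin 3 × Fin 3, Integrable (fun v : E3 =>
        fderiv ℝ u x (EuclideanSpace.single p.2 1) p.1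
          * (v p.1 * v p.2 * v i * globalMaxwellian v)) :=
      fun p => (K3 p.1 p.2 i).const_mul _
    have h3 : ∀ p : Fin 3 × Fin 3, Integrable (fun v : E3 =>
        fderiv ℝ θ x (EuclideanSpace.single p.2 1) / 2
          * (v p.2 * v i * (v p.1) ^ 2 * globalMaxwellian v
              - v p.2 * v i * globalMaxwellian v)) :=
      fun p => ((K4 p.2 i p.1).sub (K2 p.2 i)).const_mul _
    have hI1 := integrable_finset_sum (μ := volume) Finset.univ (fun j _ => h1 j)
    have hI2 := integrable_finset_sum (μ := volume) Finset.univ (fun p _ => h2 p)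
    have hI3 := integrable_finset_sum (μ := volume) Finset.univ (fun p _ => h3 p)
    have hI23 : Integrable (fun v : E3 =>
        (∑ p : Fin 3 × Fin 3, fderiv ℝ u x (EuclideanSpace.single p.2 1) p.1
            * (v p.1 * v p.2 * v i * globalMaxwellian v))
        + (∑ p : Fin 3 × Fin 3, fderiv ℝ θ x (EuclideanSpace.single p.2 1) / 2
            * (v p.2 * v i * (v p.1) ^ 2 * globalMaxwellian v
                - v p.2 * v i * globalMaxwellian v))) :=
      hI2.add hI3
    rw [integral_add hI1 hI23, integral_add hI2 hI3,
      integral_finset_sum _ (fun j _ => h1 j), integral_finset_sum _ (fun p _ => h2 p),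
      integral_finset_sum _ (fun p _ => h3 p)]
    simp_rw [integral_const_mul]
    have hv3 : ∀ p : Fin 3 × Fin 3, (∫ v : E3,
        (v p.2 * v i * (v p.1) ^ 2 * globalMaxwellian v
          - v p.2 * v i * globalMaxwellian v))
        = (if p.2 = i then (if p.2 = p.1 then 3 else 1) else 0)
            - (if p.2 = i then 1 else 0) := by
      intro p
      rw [integral_sub (K4 p.2 i p.1) (K2 p.2 i), J4 p.2 i p.1, J2 p.2 i]
    have hadd : fderiv ℝ (fun y => ρ y + θ y) x = fderiv ℝ ρ x + fderiv ℝ θ x :=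
      fderiv_add hρ hθ
    rw [hadd]
    simp only [hv3, J2, J3, ContinuousLinearMap.add_apply]
    fin_cases i <;>
      (norm_num [Fintype.sum_prod_type, Fin.sum_univ_three] <;> norm_num [Fin.ext_iff] <;> try rfl)
  · -- part (iii)
    have hfun : (fun v : E3 =>
        fderiv ℝ (fun y => hilbertFirst ρ θ u y v) x v
          * (‖v‖ ^ 2 / 2 * Real.sqrt (globalMaxwellian v)))
        = fun v =>
          (∑ q : Fin 3 × Fin 3, fderiv ℝ ρ x (EuclideanSpace.single q.1 1) / 2
              * (v q.1 * (v q.2) ^ 2 * globalMaxwellian v))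
          + ((∑ q : (Fin 3 × Fin 3) × Fin 3,
                fderiv ℝ u x (EuclideanSpace.single q.1.2 1) q.1.1 / 2
                  * (v q.1.1 * v q.1.2 * (v q.2) ^ 2 * globalMaxwellian v))
            + (∑ q : (Fin 3 × Fin 3) × Fin 3,
                fderiv ℝ θ x (EuclideanSpace.single q.1.2 1) / 4
                  * (v q.1.2 * (v q.1.1) ^ 2 * (v q.2) ^ 2 * globalMaxwellian v
                      - v q.1.2 * (v q.2) ^ 2 * globalMaxwellian v))) := by
      funext v
      rw [fderiv_hilbert hρ hθ hu v, scalar_expand]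
      set s := Real.sqrt (globalMaxwellian v) with hs
      have hsq : s * s = globalMaxwellian v := by
        rw [hs]; exact Real.mul_self_sqrt (globalMaxwellian_nonneg v)
      rw [← hsq, norm_sq_expand]
      simp only [Fintype.sum_prod_type, Fin.sum_univ_three]
      ring
    rw [hfun]
    have h1 : ∀ q : Fin 3 × Fin 3, Integrable (fun v : E3 =>
        fderiv ℝ ρ x (EuclideanSpace.single q.1 1) / 2
          * (v q.1 * (v q.2) ^ 2 * globalMaxwellian v)) :=
      fun q => (K3' q.1 q.2).const_mul _
    have h2 : ∀ q : (Fin 3 × Fin 3) × Fin 3, Integrable (fun v : E3 =>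
        fderiv ℝ u x (EuclideanSpace.single q.1.2 1) q.1.1 / 2
          * (v q.1.1 * v q.1.2 * (v q.2) ^ 2 * globalMaxwellian v)) :=
      fun q => (K4 q.1.1 q.1.2 q.2).const_mul _
    have h3 : ∀ q : (Fin 3 × Fin 3) × Fin 3, Integrable (fun v : E3 =>
        fderiv ℝ θ x (EuclideanSpace.single q.1.2 1) / 4
          * (v q.1.2 * (v q.1.1) ^ 2 * (v q.2) ^ 2 * globalMaxwellian v
              - v q.1.2 * (v q.2) ^ 2 * globalMaxwellian v)) :=
      fun q => ((K5 q.1.2 q.1.1 q.2).sub (K3' q.1.2 q.2)).const_mul _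
    have hI1 := integrable_finset_sum (μ := volume) Finset.univ (fun q _ => h1 q)
    have hI2 := integrable_finset_sum (μ := volume) Finset.univ (fun q _ => h2 q)
    have hI3 := integrable_finset_sum (μ := volume) Finset.univ (fun q _ => h3 q)
    have hI23 : Integrable (fun v : E3 =>
        (∑ q : (Fin 3 × Fin 3) × Fin 3,
            fderiv ℝ u x (EuclideanSpace.single q.1.2 1) q.1.1 / 2
              * (v q.1.1 * v q.1.2 * (v q.2) ^ 2 * globalMaxwellian v))
        + (∑ q : (Fin 3 × Fin 3) × Fin 3,
            fderiv ℝ θ x (EuclideanSpace.single q.1.2 1) / 4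
              * (v q.1.2 * (v q.1.1) ^ 2 * (v q.2) ^ 2 * globalMaxwellian v
                  - v q.1.2 * (v q.2) ^ 2 * globalMaxwellian v))) :=
      hI2.add hI3
    rw [integral_add hI1 hI23, integral_add hI2 hI3,
      integral_finset_sum _ (fun q _ => h1 q), integral_finset_sum _ (fun q _ => h2 q),
      integral_finset_sum _ (fun q _ => h3 q)]
    simp_rw [integral_const_mul]
    have hv3 : ∀ q : (Fin 3 × Fin 3) × Fin 3, (∫ v : E3,
        (v q.1.2 * (v q.1.1) ^ 2 * (v q.2) ^ 2 * globalMaxwellian v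
          - v q.1.2 * (v q.2) ^ 2 * globalMaxwellian v)) = 0 := by
      intro q
      rw [integral_sub (K5 q.1.2 q.1.1 q.2) (K3' q.1.2 q.2), J5 q.1.2 q.1.1 q.2,
        J3' q.1.2 q.2]
      ring
    simp only [hv3, J3', J4]
    norm_num [Fintype.sum_prod_type, Fin.sum_univ_three, Prod.fst, Prod.snd]
    norm_num [Fin.ext_iff]
    try ring
end
end

section
/- Weighted Grad-kernel integral estimate: for every 0 < ϱ < 1/4 there exists a constant C_ϱ such that for all v ∈ ℝ³, ∫_{ℝ³} (1/|v−v⋆|) exp( −|v−v⋆|²/8 − (1/8) (|v|²−|v⋆|²)²/|v−v⋆|² + ϱ(|v|² − |v⋆|²) ) dv⋆ ≤ C_ϱ / (1+|v|). -/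
open MeasureTheory Real
open scoped RealInnerProductSpace

noncomputable section
set_option maxHeartbeats 2000000

private lemma grad_key_ineq {ϱ : ℝ} (hϱ₀ : 0 < ϱ) (hϱ₁ : ϱ < 1 / 4) {r : ℝ} (hr : 0 < r)
    (I : ℝ) :
    -r ^ 2 / 8 - 1 / 8 * (2 * I + r ^ 2) ^ 2 / r ^ 2 - ϱ * (2 * I + r ^ 2) ≤
      -((1 / 4 - ϱ) / 8 * r ^ 2) - (1 / 4 - ϱ) / 2 * |I| := by
  have hr' : r ≠ 0 := ne_of_gt hr
  have hp : I = I / r * r := by field_simp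
  set p := I / r with hpdef
  have h1 : -r ^ 2 / 8 - 1 / 8 * (2 * I + r ^ 2) ^ 2 / r ^ 2 - ϱ * (2 * I + r ^ 2)
      = -((1 / 4 + ϱ) * (r + p) ^ 2) - (1 / 4 - ϱ) * p ^ 2 := by
    rw [hp]
    field_simp
    ring
  rw [h1]
  have hIabs : |I| = |p| * r := by
    rw [hp, abs_mul, abs_of_pos hr]
  rw [hIabs]
  have hbpos : (0:ℝ) < 1 / 4 - ϱ := by linarith
  have h2 : (1 / 4 - ϱ) * (r + p) ^ 2 ≤ (1 / 4 + ϱ) * (r + p) ^ 2 := by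
    nlinarith [sq_nonneg (r + p)]
  have hpr : -(|p| * r) ≤ p * r := by
    have h := neg_abs_le p
    nlinarith [abs_nonneg p]
  have h3 : r ^ 2 / 8 + |p| * r / 2 ≤ (r + p) ^ 2 + p ^ 2 := by
    nlinarith [sq_nonneg (7 * r - 10 * |p|), sq_abs p]
  nlinarith [mul_le_mul_of_nonneg_left h3 hbpos.le]

private lemma grad_integrable_h {β : ℝ} (hβ : 0 < β) :
    Integrable (fun t : ℝ => |t| ^ (-(1/2) : ℝ) * Real.exp (-β * t ^ 2)) := by
  have hIoi : IntegrableOn (fun t : ℝ => |t| ^ (-(1/2) : ℝ) * Real.exp (-β * t ^ 2)) (Set.Ioi 0) := by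
    refine (integrableOn_rpow_mul_exp_neg_mul_sq hβ (by norm_num : (-1:ℝ) < -(1/2))).congr_fun
      (fun x hx => ?_) measurableSet_Ioi
    rw [abs_of_pos hx]
  have hIic : IntegrableOn (fun t : ℝ => |t| ^ (-(1/2) : ℝ) * Real.exp (-β * t ^ 2)) (Set.Iic 0) := by
    rw [← Measure.map_neg_eq_self (volume : Measure ℝ)]
    have m : MeasurableEmbedding fun x : ℝ => -x := (Homeomorph.neg ℝ).measurableEmbedding
    rw [m.integrableOn_map_iff]
    simp only [Function.comp_def, abs_neg, neg_sq, Set.neg_preimage, Set.neg_Iic, neg_zero]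
    exact Iff.mpr integrableOn_Ici_iff_integrableOn_Ioi hIoi
  rw [← integrableOn_univ, ← Set.Iic_union_Ioi (a := (0:ℝ))]
  exact hIic.union hIoi

/-- Weighted Grad-kernel integral estimate: for `0 < ϱ < 1/4` there is a constant `C_ϱ`
such that for all `v ∈ ℝ³`,
`∫ (1/|v−v⋆|) exp( −|v−v⋆|²/8 − (1/8)(|v|²−|v⋆|²)²/|v−v⋆|² + ϱ(|v|²−|v⋆|²) ) dv⋆ ≤ C_ϱ/(1+|v|)`. -/
theorem weighted_grad_kernel_estimate (ϱ : ℝ) (hϱ₀ : 0 < ϱ) (hϱ₁ : ϱ < 1 / 4) :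
    ∃ C : ℝ, 0 < C ∧
      ∀ v : EuclideanSpace ℝ (Fin 3),
        (∫ vs : EuclideanSpace ℝ (Fin 3),
          (1 / ‖v - vs‖) *
            Real.exp (-‖v - vs‖ ^ 2 / 8 -
              (1 / 8) * (‖v‖ ^ 2 - ‖vs‖ ^ 2) ^ 2 / ‖v - vs‖ ^ 2 +
              ϱ * (‖v‖ ^ 2 - ‖vs‖ ^ 2))) ≤ C / (1 + ‖v‖) := by
  have hbpos : (0:ℝ) < 1 / 4 - ϱ := by linarith
  set β : ℝ := (1 / 4 - ϱ) / 8 with hβdef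
  set κ : ℝ := (1 / 4 - ϱ) / 2 with hκdef
  have hβ : 0 < β := by rw [hβdef]; linarith
  have hκ : 0 < κ := by rw [hκdef]; linarith
  set h : ℝ → ℝ := fun t => |t| ^ (-(1/2) : ℝ) * Real.exp (-β * t ^ 2) with hhdef
  have hInt : Integrable h := grad_integrable_h hβ
  have hhnn : ∀ t, 0 ≤ h t := fun t => by rw [hhdef]; positivity
  set M : ℝ := ∫ t, h t with hMdef
  have hM0 : 0 ≤ M := integral_nonneg hhnn
  set A : ℝ := max (2 * Real.sqrt (π / β)) (4 / κ) with hAdef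
  have hA : 0 < A := lt_of_lt_of_le (by positivity) (le_max_right _ _)
  refine ⟨A * M ^ 2 + 1, by nlinarith [mul_nonneg hA.le (sq_nonneg M)], fun v => ?_⟩
  set V : ℝ := ‖v‖ with hVdef
  have hV0 : 0 ≤ V := norm_nonneg v
  have hVpos : (0:ℝ) < 1 + V := by linarith
  -- the original integrand
  set Orig : EuclideanSpace ℝ (Fin 3) → ℝ := fun vs =>
    (1 / ‖v - vs‖) *
      Real.exp (-‖v - vs‖ ^ 2 / 8 -
        (1 / 8) * (‖v‖ ^ 2 - ‖vs‖ ^ 2) ^ 2 / ‖v - vs‖ ^ 2 +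
        ϱ * (‖v‖ ^ 2 - ‖vs‖ ^ 2)) with hOrigdef
  -- dominating radial-angular function
  set G : EuclideanSpace ℝ (Fin 3) → ℝ := fun w =>
    (1 / ‖w‖) * Real.exp (-(β * ‖w‖ ^ 2) - κ * |⟪v, w⟫|) with hGdef
  -- a unit vector in the direction of `v`
  obtain ⟨e, henorm, hve⟩ : ∃ e : EuclideanSpace ℝ (Fin 3), ‖e‖ = 1 ∧ v = ‖v‖ • e := by
    rcases eq_or_ne v 0 with hv | hv
    · refine ⟨EuclideanSpace.single 0 1, by simp [EuclideanSpace.norm_single], by simp [hv]⟩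
    · refine ⟨‖v‖⁻¹ • v, ?_, ?_⟩
      · rw [norm_smul, norm_inv, norm_norm, inv_mul_cancel₀ (norm_ne_zero_iff.mpr hv)]
      · rw [smul_smul, mul_inv_cancel₀ (norm_ne_zero_iff.mpr hv), one_smul]
  -- an orthonormal basis whose first vector is `e`
  obtain ⟨b, hb0⟩ : ∃ b : OrthonormalBasis (Fin 3) ℝ (EuclideanSpace ℝ (Fin 3)),
      b 0 = e := by
    have horth : Orthonormal ℝ (({0} : Set (Fin 3)).restrict fun _ : Fin 3 => e) := by
      constructor
      · intro i; exact henorm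
      · intro i j hij
        have hi : (i : Fin 3) = 0 := i.2
        have hj : (j : Fin 3) = 0 := j.2
        exact absurd (Subtype.ext (hi.trans hj.symm)) hij
    obtain ⟨b, hb⟩ := horth.exists_orthonormalBasis_extension_of_card_eq
      (by simp [finrank_euclideanSpace_fin])
    exact ⟨b, hb 0 rfl⟩
  have hinner : ∀ w : EuclideanSpace ℝ (Fin 3), ⟪v, w⟫ = V * b.repr w 0 := by
    intro w
    conv_lhs => rw [hve]
    rw [real_inner_smul_left, b.repr_apply_apply, hb0, hVdef]
  have habs : ∀ w : EuclideanSpace ℝ (Fin 3), |⟪v, w⟫| = V * |b.repr w 0| := by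
    intro w
    rw [hinner w, abs_mul, abs_of_nonneg hV0]

  -- pointwise bound : Orig (v + w) ≤ G w
  have hpt : ∀ w : EuclideanSpace ℝ (Fin 3), Orig (v + w) ≤ G w := by
    intro w
    rcases eq_or_ne w 0 with hw | hw
    · subst hw
      have h0 : v - (v + 0) = (0 : EuclideanSpace ℝ (Fin 3)) := by simp
      simp only [hOrigdef, hGdef, h0, norm_zero, div_zero, zero_mul]
      exact le_rfl
    · have hr : 0 < ‖w‖ := norm_pos_iff.mpr hw
      have hsub : v - (v + w) = -w := by abel
      have hs : ‖v‖ ^ 2 - ‖v + w‖ ^ 2 = -(2 * ⟪v, w⟫ + ‖w‖ ^ 2) := by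
        rw [@norm_add_sq_real]; ring
      simp only [hOrigdef, hGdef, hsub, norm_neg]
      refine mul_le_mul_of_nonneg_left ?_ (by positivity)
      rw [Real.exp_le_exp, hs]
      have K := grad_key_ineq hϱ₀ hϱ₁ hr (⟪v, w⟫)
      rw [← hβdef, ← hκdef] at K
      rw [neg_sq, mul_neg]
      linarith [K]
  -- relate G to a function on the Euclidean model space
  set Φ : EuclideanSpace ℝ (Fin 3) → ℝ := fun x =>
    (1 / ‖x‖) * Real.exp (-(β * ‖x‖ ^ 2) - κ * (V * |x 0|)) with hΦdef
  have hGΦ : G = fun w => Φ (b.repr w) := by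
    funext w
    simp only [hGdef, hΦdef]
    rw [LinearIsometryEquiv.norm_map, habs w]
  set F₁ : (Fin 3 → ℝ) → ℝ := fun y =>
    (1 / Real.sqrt (y 0 ^ 2 + y 1 ^ 2 + y 2 ^ 2)) *
      Real.exp (-(β * (y 0 ^ 2 + y 1 ^ 2 + y 2 ^ 2)) - κ * (V * |y 0|)) with hF₁def
  have hΦF₁ : ∀ x : EuclideanSpace ℝ (Fin 3),
      Φ x = F₁ ((MeasurableEquiv.toLp 2 (Fin 3 → ℝ)).symm x) := by
    intro x
    have hx1 : ‖x‖ = Real.sqrt (x 0 ^ 2 + x 1 ^ 2 + x 2 ^ 2) := by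
      rw [EuclideanSpace.norm_eq, Fin.sum_univ_three]
      simp [Real.norm_eq_abs, sq_abs]
    have hx2 : ‖x‖ ^ 2 = x 0 ^ 2 + x 1 ^ 2 + x 2 ^ 2 := by
      rw [hx1, Real.sq_sqrt (by positivity)]
    simp only [hΦdef, hF₁def]
    rw [hx2, hx1]
    rfl
  set F₂ : ℝ × (Fin 2 → ℝ) → ℝ := fun q =>
    (1 / Real.sqrt (q.1 ^ 2 + q.2 0 ^ 2 + q.2 1 ^ 2)) *
      Real.exp (-(β * (q.1 ^ 2 + q.2 0 ^ 2 + q.2 1 ^ 2)) - κ * (V * |q.1|)) with hF₂def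
  set F₃ : ℝ × ℝ × ℝ → ℝ := fun p =>
    (1 / Real.sqrt (p.1 ^ 2 + p.2.1 ^ 2 + p.2.2 ^ 2)) *
      Real.exp (-(β * (p.1 ^ 2 + p.2.1 ^ 2 + p.2.2 ^ 2)) - κ * (V * |p.1|)) with hF₃def
  have hF₁F₂ : ∀ y : Fin 3 → ℝ,
      F₁ y = F₂ (MeasurableEquiv.piFinSuccAbove (fun _ : Fin 3 => ℝ) 0 y) := by
    intro y
    simp only [hF₁def, hF₂def, MeasurableEquiv.piFinSuccAbove_apply,
      Fin.insertNthEquiv_symm_apply, Fin.removeNth, Fin.zero_succAbove,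
      Fin.succ_zero_eq_one, Fin.succ_one_eq_two]
  have hF₂F₃ : ∀ q : ℝ × (Fin 2 → ℝ), F₂ q = F₃ (q.1, MeasurableEquiv.finTwoArrow q.2) := by
    intro q
    simp only [hF₂def, hF₃def, MeasurableEquiv.finTwoArrow_apply]
  have hmp_η : MeasurePreserving
      (fun q : ℝ × (Fin 2 → ℝ) => (q.1, MeasurableEquiv.finTwoArrow q.2))
      (volume : Measure (ℝ × (Fin 2 → ℝ))) (volume : Measure (ℝ × ℝ × ℝ)) := by
    rw [Measure.volume_eq_prod, Measure.volume_eq_prod ℝ (ℝ × ℝ), Measure.volume_eq_prod ℝ ℝ]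
    exact (MeasurePreserving.id (volume : Measure ℝ)).prod (volume_preserving_finTwoArrow ℝ)
  have hemb_η : MeasurableEmbedding
      (fun q : ℝ × (Fin 2 → ℝ) => (q.1, MeasurableEquiv.finTwoArrow q.2)) :=
    ((MeasurableEquiv.refl ℝ).prodCongr MeasurableEquiv.finTwoArrow).measurableEmbedding
  -- the integral equalities
  have hintGΦ : (∫ w, G w) = ∫ x, Φ x := by
    rw [hGΦ]
    exact (b.measurePreserving_repr).integral_comp (b.repr.toHomeomorph.measurableEmbedding) Φ
  have hint1 : (∫ x, Φ x) = ∫ y, F₁ y := by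
    simp only [hΦF₁]
    exact (EuclideanSpace.volume_preserving_symm_measurableEquiv_toLp (Fin 3)).integral_comp' F₁
  have hint2 : (∫ y, F₁ y) = ∫ q, F₂ q := by
    simp only [hF₁F₂]
    exact (volume_preserving_piFinSuccAbove (fun _ : Fin 3 => ℝ) 0).integral_comp' F₂
  have hint3 : (∫ q, F₂ q) = ∫ p, F₃ p := by
    simp only [hF₂F₃]
    exact hmp_η.integral_comp hemb_η F₃
  -- one-dimensional factors
  set gV : ℝ → ℝ := fun t => Real.exp (-(β * t ^ 2) - κ * (V * |t|)) with hgVdef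
  have hgVnn : ∀ t, 0 ≤ gV t := fun t => (Real.exp_pos _).le
  have hgauss : Integrable (fun t : ℝ => Real.exp (-(β * t ^ 2))) := by
    simpa [neg_mul] using integrable_exp_neg_mul_sq hβ
  have hgVcont : Continuous gV :=
    Real.continuous_exp.comp (((continuous_const.mul (continuous_pow 2)).neg).sub
      (continuous_const.mul (continuous_const.mul continuous_abs)))
  have hgVint : Integrable gV := by
    refine hgauss.mono' hgVcont.aestronglyMeasurable (ae_of_all _ fun t => ?_)
    rw [Real.norm_eq_abs, abs_of_nonneg (hgVnn t)]
    apply Real.exp_le_exp.mpr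
    nlinarith [mul_nonneg hκ.le (mul_nonneg hV0 (abs_nonneg t))]
  have hP : Integrable (fun p : ℝ × ℝ × ℝ => gV p.1 * (h p.2.1 * h p.2.2)) := by
    rw [Measure.volume_eq_prod, Measure.volume_eq_prod ℝ ℝ]
    exact hgVint.mul_prod (hInt.mul_prod hInt)
  -- pointwise comparison on the product space
  have hgood : ∀ p : ℝ × ℝ × ℝ, p.2.1 ≠ 0 → p.2.2 ≠ 0 →
      F₃ p ≤ gV p.1 * (h p.2.1 * h p.2.2) := by
    rintro ⟨t, u, z⟩ hu hz
    simp only [hF₃def, hgVdef, hhdef]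
    have hu0 : 0 < |u| := abs_pos.mpr hu
    have hz0 : 0 < |z| := abs_pos.mpr hz
    have h1 : |u| * |z| ≤ t ^ 2 + u ^ 2 + z ^ 2 := by
      nlinarith [sq_nonneg (|u| - |z|), sq_abs u, sq_abs z, sq_nonneg t]
    have hS0 : 0 < t ^ 2 + u ^ 2 + z ^ 2 := lt_of_lt_of_le (mul_pos hu0 hz0) h1
    have e1 : 1 / Real.sqrt (t ^ 2 + u ^ 2 + z ^ 2)
        = (t ^ 2 + u ^ 2 + z ^ 2) ^ (-(1/2) : ℝ) := by
      rw [Real.sqrt_eq_rpow, one_div, ← Real.rpow_neg hS0.le]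
    have hsqrt : 1 / Real.sqrt (t ^ 2 + u ^ 2 + z ^ 2)
        ≤ |u| ^ (-(1/2) : ℝ) * |z| ^ (-(1/2) : ℝ) := by
      rw [e1, ← Real.mul_rpow (abs_nonneg u) (abs_nonneg z)]
      exact Real.rpow_le_rpow_of_nonpos (mul_pos hu0 hz0) h1 (by norm_num)
    have hexp : Real.exp (-(β * (t ^ 2 + u ^ 2 + z ^ 2)) - κ * (V * |t|)) =
        Real.exp (-(β * t ^ 2) - κ * (V * |t|)) *
          (Real.exp (-β * u ^ 2) * Real.exp (-β * z ^ 2)) := by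
      rw [← Real.exp_add, ← Real.exp_add]
      congr 1
      ring
    calc (1 / Real.sqrt (t ^ 2 + u ^ 2 + z ^ 2)) *
          Real.exp (-(β * (t ^ 2 + u ^ 2 + z ^ 2)) - κ * (V * |t|))
        = (1 / Real.sqrt (t ^ 2 + u ^ 2 + z ^ 2)) *
            (Real.exp (-(β * t ^ 2) - κ * (V * |t|)) *
              (Real.exp (-β * u ^ 2) * Real.exp (-β * z ^ 2))) := by rw [hexp]
      _ ≤ (|u| ^ (-(1/2) : ℝ) * |z| ^ (-(1/2) : ℝ)) *
            (Real.exp (-(β * t ^ 2) - κ * (V * |t|)) *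
              (Real.exp (-β * u ^ 2) * Real.exp (-β * z ^ 2))) :=
          mul_le_mul_of_nonneg_right hsqrt (by positivity)
      _ = Real.exp (-(β * t ^ 2) - κ * (V * |t|)) *
            (|u| ^ (-(1/2) : ℝ) * Real.exp (-β * u ^ 2) *
              (|z| ^ (-(1/2) : ℝ) * Real.exp (-β * z ^ 2))) := by ring
  have hnull : ∀ᵐ p : ℝ × ℝ × ℝ, p.2.1 ≠ 0 ∧ p.2.2 ≠ 0 := by
    have n1 : (volume : Measure (ℝ × ℝ × ℝ)) {p | p.2.1 = 0} = 0 := by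
      have hseteq : {p : ℝ × ℝ × ℝ | p.2.1 = 0}
          = (Set.univ : Set ℝ) ×ˢ (({0} : Set ℝ) ×ˢ (Set.univ : Set ℝ)) := by
        ext ⟨a, b', c⟩; simp [eq_comm]
      rw [hseteq, Measure.volume_eq_prod, Measure.prod_prod, Measure.volume_eq_prod, Measure.prod_prod]
      simp
    have n2 : (volume : Measure (ℝ × ℝ × ℝ)) {p | p.2.2 = 0} = 0 := by
      have hseteq : {p : ℝ × ℝ × ℝ | p.2.2 = 0}
          = (Set.univ : Set ℝ) ×ˢ ((Set.univ : Set ℝ) ×ˢ ({0} : Set ℝ)) := by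
        ext ⟨a, b', c⟩; simp [eq_comm]
      rw [hseteq, Measure.volume_eq_prod, Measure.prod_prod, Measure.volume_eq_prod, Measure.prod_prod]
      simp
    rw [ae_iff]
    refine measure_mono_null (fun p hp => ?_) (measure_union_null n1 n2)
    rw [Set.mem_setOf_eq, not_and_or, not_not, not_not] at hp
    rcases hp with hp | hp
    · exact Or.inl hp
    · exact Or.inr hp
  have haeF₃ : ∀ᵐ p : ℝ × ℝ × ℝ, F₃ p ≤ gV p.1 * (h p.2.1 * h p.2.2) :=
    hnull.mono fun p hp => hgood p hp.1 hp.2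
  have hF₃nn : ∀ p, 0 ≤ F₃ p := fun p => by
    simp only [hF₃def]; positivity
  have hF₃meas : AEStronglyMeasurable F₃ (volume : Measure (ℝ × ℝ × ℝ)) := by
    apply Measurable.aestronglyMeasurable
    simp only [hF₃def]
    fun_prop
  have hF₃int : Integrable F₃ := by
    refine hP.mono' hF₃meas (haeF₃.mono fun p hp => ?_)
    rwa [Real.norm_eq_abs, abs_of_nonneg (hF₃nn p)]
  have hF₂int : Integrable F₂ := by
    rw [show F₂ = fun q : ℝ × (Fin 2 → ℝ) => F₃ (q.1, MeasurableEquiv.finTwoArrow q.2)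
      from funext hF₂F₃]
    exact (hmp_η.integrable_comp_emb hemb_η).mpr hF₃int
  have hF₁int : Integrable F₁ := by
    rw [show F₁ = fun y => F₂ (MeasurableEquiv.piFinSuccAbove (fun _ : Fin 3 => ℝ) 0 y)
      from funext hF₁F₂]
    exact ((volume_preserving_piFinSuccAbove (fun _ : Fin 3 => ℝ) 0).integrable_comp_emb
      (MeasurableEquiv.measurableEmbedding _)).mpr hF₂int
  have hΦint : Integrable Φ := by
    rw [show Φ = fun x => F₁ ((MeasurableEquiv.toLp 2 (Fin 3 → ℝ)).symm x) from funext hΦF₁]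
    exact ((EuclideanSpace.volume_preserving_symm_measurableEquiv_toLp (Fin 3)).integrable_comp_emb
      (MeasurableEquiv.measurableEmbedding _)).mpr hF₁int
  have hGint : Integrable G := by
    rw [hGΦ]
    exact ((b.measurePreserving_repr).integrable_comp_emb
      (b.repr.toHomeomorph.measurableEmbedding)).mpr hΦint
  -- bounds on ∫ gV
  have hgV_int_nonneg : 0 ≤ ∫ t, gV t := integral_nonneg hgVnn
  have hg1 : (∫ t, gV t) ≤ Real.sqrt (π / β) := by
    calc (∫ t, gV t) ≤ ∫ t : ℝ, Real.exp (-(β * t ^ 2)) := by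
          refine integral_mono_of_nonneg (ae_of_all _ hgVnn) hgauss (ae_of_all _ fun t => ?_)
          apply Real.exp_le_exp.mpr
          nlinarith [mul_nonneg hκ.le (mul_nonneg hV0 (abs_nonneg t))]
      _ = Real.sqrt (π / β) := by
          rw [show (fun t : ℝ => Real.exp (-(β * t ^ 2))) = fun t : ℝ => Real.exp (-β * t ^ 2)
            from funext fun t => by rw [neg_mul]]
          exact integral_gaussian β
  have hgA : (∫ t, gV t) ≤ A / (1 + V) := by
    rcases le_or_gt V 1 with hV1 | hV1
    · rw [le_div_iff₀ hVpos]
      have hs0 : 0 ≤ Real.sqrt (π / β) := Real.sqrt_nonneg _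
      have hAs : 2 * Real.sqrt (π / β) ≤ A := le_max_left _ _
      nlinarith [mul_nonneg (sub_nonneg.mpr hg1) hVpos.le,
        mul_nonneg hs0 (by linarith : (0:ℝ) ≤ 1 - V)]
    · have hVp : 0 < V := lt_trans one_pos hV1
      have h2V : 0 < κ * V := mul_pos hκ hVp
      have hg2 : (∫ t, gV t) ≤ 2 * (κ * V)⁻¹ := by
        have hGfeq : ∀ t : ℝ,
            gV t = (fun u : ℝ => Real.exp (-(β * u ^ 2) - κ * (V * u))) |t| := by
          intro t
          simp only [hgVdef, sq_abs]
        have habsval : (∫ t, gV t)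
            = 2 * ∫ u in Set.Ioi (0:ℝ), Real.exp (-(β * u ^ 2) - κ * (V * u)) := by
          rw [show gV = fun t : ℝ =>
            (fun u : ℝ => Real.exp (-(β * u ^ 2) - κ * (V * u))) |t| from funext hGfeq]
          exact integral_comp_abs (f := fun u : ℝ => Real.exp (-(β * u ^ 2) - κ * (V * u)))
        rw [habsval]
        have hexpint : IntegrableOn (fun u : ℝ => Real.exp (-(κ * V * u))) (Set.Ioi 0) := by
          simpa [neg_mul] using exp_neg_integrableOn_Ioi 0 h2V
        have hGfint : IntegrableOn
            (fun u : ℝ => Real.exp (-(β * u ^ 2) - κ * (V * u))) (Set.Ioi 0) := by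
          refine hexpint.mono' ?_ ?_
          · exact (Real.continuous_exp.comp (((continuous_const.mul (continuous_pow 2)).neg).sub
              (continuous_const.mul (continuous_const.mul continuous_id)))).aestronglyMeasurable
          · filter_upwards [ae_restrict_mem measurableSet_Ioi] with u hu
            rw [Real.norm_eq_abs, abs_of_nonneg (Real.exp_pos _).le]
            apply Real.exp_le_exp.mpr
            nlinarith [mul_nonneg hβ.le (sq_nonneg u)]
        have hmono : (∫ u in Set.Ioi (0:ℝ), Real.exp (-(β * u ^ 2) - κ * (V * u)))
            ≤ ∫ u in Set.Ioi (0:ℝ), Real.exp (-(κ * V * u)) := by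
          refine setIntegral_mono_on hGfint hexpint measurableSet_Ioi (fun u hu => ?_)
          apply Real.exp_le_exp.mpr
          nlinarith [mul_nonneg hβ.le (sq_nonneg u)]
        have hval : (∫ u in Set.Ioi (0:ℝ), Real.exp (-(κ * V * u))) = (κ * V)⁻¹ := by
          have hcomp := integral_comp_mul_left_Ioi (fun u : ℝ => Real.exp (-u)) 0 h2V
          simp only [mul_zero] at hcomp
          rw [hcomp, integral_exp_neg_Ioi]
          simp
        rw [← hval]
        linarith [hmono]
      rw [le_div_iff₀ hVpos, ← mul_le_mul_iff_right₀ hκ]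
      have hι : (∫ t, gV t) * (κ * V) ≤ 2 := by
        rw [← div_eq_mul_inv] at hg2
        exact (le_div_iff₀ h2V).mp hg2
      have hAκ : 4 ≤ A * κ := by
        have h4 : 4 / κ ≤ A := le_max_right _ _
        rw [div_le_iff₀ hκ] at h4
        linarith
      nlinarith [hι, hAκ, mul_nonneg (mul_nonneg hκ.le hgV_int_nonneg)
        (by linarith : (0:ℝ) ≤ V - 1)]
  have hPval : (∫ p : ℝ × ℝ × ℝ, gV p.1 * (h p.2.1 * h p.2.2)) = (∫ t, gV t) * (M * M) := by
    have h1 : (∫ p : ℝ × ℝ × ℝ, gV p.1 * (h p.2.1 * h p.2.2))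
        = (∫ t, gV t) * (∫ u : ℝ × ℝ, h u.1 * h u.2) := by
      rw [Measure.volume_eq_prod]
      exact integral_prod_mul gV (fun u : ℝ × ℝ => h u.1 * h u.2)
    have h2 : (∫ u : ℝ × ℝ, h u.1 * h u.2) = M * M := by
      rw [Measure.volume_eq_prod]
      exact (integral_prod_mul h h).trans (by rw [hMdef])
    rw [h1, h2]
  calc (∫ vs, Orig vs) = ∫ w, Orig (v + w) := (integral_add_left_eq_self Orig v).symm
    _ ≤ ∫ w, G w := by
        refine integral_mono_of_nonneg (ae_of_all _ fun w => ?_) hGint (ae_of_all _ hpt)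
        simp only [hOrigdef]
        positivity
    _ = ∫ x, Φ x := hintGΦ
    _ = ∫ y, F₁ y := hint1
    _ = ∫ q, F₂ q := hint2
    _ = ∫ p, F₃ p := hint3
    _ ≤ ∫ p : ℝ × ℝ × ℝ, gV p.1 * (h p.2.1 * h p.2.2) :=
        integral_mono_of_nonneg (ae_of_all _ hF₃nn) hP haeF₃
    _ = (∫ t, gV t) * (M * M) := hPval
    _ ≤ (A / (1 + V)) * (M * M) := mul_le_mul_of_nonneg_right hgA (mul_nonneg hM0 hM0)
    _ ≤ (A * M ^ 2 + 1) / (1 + V) := by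
        rw [div_mul_eq_mul_div]
        gcongr
        nlinarith [hA.le]

end
end

section
/- Time derivative of the Dirichlet heat potential under the compatibility condition (absence of an initial layer): let κ, η > 0, a ≥ 0, H(t,z) = (κηt)^{−1/2} e^{−z²/(4κηt)} e^{−κηa²t}, G_D(t,x,y) = H(t,x−y) − H(t,x+y), and let g ∈ C²([0,∞)) satisfy g(0) = 0 and |g(y)| + |g′(y)| + |g″(y)| ≤ M e^{−cy} for some M, c > 0. Then for every t > 0 and x > 0, ∂_t ∫₀^∞ G_D(t,x,y) g(y) dy = ∫₀^∞ G_D(t,x,y) · κη ( g″(y) − a² g(y) ) dy. -/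
open MeasureTheory Real Set

noncomputable section

/-- The one-dimensional damped heat kernel
`H(t,z) = (κηt)^{−1/2} e^{−z²/(4κηt)} e^{−κηa²t}`. -/
def heatKer (κ η a t z : ℝ) : ℝ :=
  (Real.sqrt (κ * η * t))⁻¹ * Real.exp (-z ^ 2 / (4 * (κ * η * t))) *
    Real.exp (-(κ * η * a ^ 2 * t))

/-- The half-line heat kernel with homogeneous Dirichlet boundary condition,
`G_D(t,x,y) = H(t,x−y) − H(t,x+y)`. -/
def dirichletKer (κ η a t x y : ℝ) : ℝ := heatKer κ η a t (x - y) - heatKer κ η a t (x + y)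

open Topology Filter

def HKt (κ η a t z : ℝ) : ℝ :=
  (-(2*t)⁻¹ + z^2/(4*(κ*η)*t^2) - κ*η*a^2) * heatKer κ η a t z

def HKz (κ η a t z : ℝ) : ℝ := (-z/(2*(κ*η*t))) * heatKer κ η a t z

def HKzz (κ η a t z : ℝ) : ℝ :=
  (-(2*(κ*η*t))⁻¹ + z^2/(4*(κ*η*t)^2)) * heatKer κ η a t z

lemma heatKer_hasDerivAt_t {κ η : ℝ} (a : ℝ) {t : ℝ} (z : ℝ) (hb : 0 < κ*η) (ht : 0 < t) :
    HasDerivAt (fun τ => heatKer κ η a τ z) (HKt κ η a t z) t := by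
  have hbt : 0 < κ * η * t := mul_pos hb ht
  have hs : Real.sqrt (κ*η*t) ≠ 0 := ne_of_gt (Real.sqrt_pos.2 hbt)
  have hss : (Real.sqrt (κ*η*t))^2 = κ*η*t := Real.sq_sqrt hbt.le
  have h1 : HasDerivAt (fun τ => (Real.sqrt (κ*η*τ))⁻¹)
      (-((1/(2*Real.sqrt (κ*η*t))) * (κ*η)) / (Real.sqrt (κ*η*t))^2) t := by
    have hc : HasDerivAt (fun τ : ℝ => κ*η*τ) (κ*η) t := by
      simpa using (hasDerivAt_id t).const_mul (κ*η)
    have := (Real.hasDerivAt_sqrt (ne_of_gt hbt)).comp t hc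
    exact (HasDerivAt.inv this hs :)
  have harg : ∀ τ : ℝ, -z ^ 2 / (4 * (κ * η * τ)) = (-z^2/(4*(κ*η))) * τ⁻¹ := by
    intro τ
    rw [show 4 * (κ*η*τ) = 4*(κ*η)*τ by ring, ← div_div]
    exact div_eq_mul_inv _ _
  have h2 : HasDerivAt (fun τ => Real.exp (-z ^ 2 / (4 * (κ * η * τ))))
      (Real.exp (-z ^ 2 / (4 * (κ * η * t))) * ((-z^2/(4*(κ*η))) * (-(t^2)⁻¹))) t := by
    have hfun : (fun τ => Real.exp (-z ^ 2 / (4 * (κ * η * τ))))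
        = fun τ => Real.exp ((-z^2/(4*(κ*η))) * τ⁻¹) := funext fun τ => by rw [harg]
    rw [hfun, harg t]
    exact ((hasDerivAt_inv (ne_of_gt ht)).const_mul _).exp
  have h3 : HasDerivAt (fun τ => Real.exp (-(κ * η * a ^ 2 * τ)))
      (Real.exp (-(κ * η * a ^ 2 * t)) * -(κ*η*a^2)) t := by
    have : HasDerivAt (fun τ : ℝ => -(κ*η*a^2*τ)) (-(κ*η*a^2)) t := by
      have h0 : HasDerivAt (fun τ : ℝ => κ*η*a^2*τ) (κ*η*a^2) t := by
        simpa using (hasDerivAt_id t).const_mul (κ*η*a^2)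
      exact h0.neg
    exact this.exp
  have h := (h1.mul h2).mul h3
  refine h.congr_deriv ?_
  simp only [Pi.mul_apply]
  unfold HKt heatKer
  set s := Real.sqrt (κ*η*t) with hsdef
  have hsinv : s⁻¹ = s/(κ*η*t) := by
    rw [eq_div_iff (ne_of_gt hbt), ← hss, sq, ← mul_assoc, inv_mul_cancel₀ hs, one_mul]
  have h2s : 1/(2*s) = s/(2*(κ*η*t)) := by
    rw [div_eq_div_iff (by positivity) (by positivity), ← hss]; ring
  rw [h2s, hss, hsinv]
  have hκ0 : κ ≠ 0 := by rintro rfl; simp at hb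
  have hη0 : η ≠ 0 := by rintro rfl; simp at hb
  field_simp
  ring

lemma heatKer_hasDerivAt_z {κ η : ℝ} (a : ℝ) {t : ℝ} (z : ℝ) (hb : 0 < κ*η) (ht : 0 < t) :
    HasDerivAt (fun w => heatKer κ η a t w) (HKz κ η a t z) z := by
  have hbt : (0:ℝ) < κ * η * t := mul_pos hb ht
  have harg : HasDerivAt (fun w : ℝ => -w ^ 2 / (4 * (κ * η * t)))
      (-(2*z) / (4 * (κ * η * t))) z := by
    have : HasDerivAt (fun w : ℝ => w ^ 2) (2*z) z := by
      simpa [mul_comm] using hasDerivAt_pow 2 z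
    simpa [neg_div] using (this.neg).div_const (4 * (κ * η * t))
  have h := ((harg.exp.const_mul ((Real.sqrt (κ*η*t))⁻¹)).mul_const
      (Real.exp (-(κ * η * a ^ 2 * t))))
  refine h.congr_deriv ?_
  unfold HKz heatKer
  field_simp
  ring

lemma HKz_hasDerivAt_z {κ η : ℝ} (a : ℝ) {t : ℝ} (z : ℝ) (hb : 0 < κ*η) (ht : 0 < t) :
    HasDerivAt (fun w => HKz κ η a t w) (HKzz κ η a t z) z := by
  have hbt : (0:ℝ) < κ * η * t := mul_pos hb ht
  have h1 : HasDerivAt (fun w : ℝ => -w/(2*(κ*η*t))) (-(1:ℝ)/(2*(κ*η*t))) z := by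
    simpa [neg_div] using ((hasDerivAt_id z).neg).div_const (2*(κ*η*t))
  have h := h1.mul (heatKer_hasDerivAt_z a z hb ht)
  refine h.congr_deriv ?_
  unfold HKzz HKz
  field_simp
  ring

lemma HKt_eq {κ η : ℝ} (a : ℝ) {t : ℝ} (z : ℝ) (hb : 0 < κ*η) (ht : 0 < t) :
    HKt κ η a t z = κ*η * HKzz κ η a t z - κ*η*a^2 * heatKer κ η a t z := by
  unfold HKt HKzz
  have hbt : (0:ℝ) < κ * η * t := mul_pos hb ht
  have hκ0 : κ ≠ 0 := by rintro rfl; simp at hb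
  have hη0 : η ≠ 0 := by rintro rfl; simp at hb
  field_simp

lemma heatKer_pos {κ η a t : ℝ} (z : ℝ) (hb : 0 < κ*η) (ht : 0 < t) :
    0 < heatKer κ η a t z := by
  have hbt : (0:ℝ) < κ * η * t := mul_pos hb ht
  unfold heatKer
  positivity

lemma heatKer_le {κ η a t : ℝ} (z : ℝ) (hb : 0 < κ*η) (ht : 0 < t) :
    heatKer κ η a t z ≤ (Real.sqrt (κ*η*t))⁻¹ := by
  have hbt : (0:ℝ) < κ * η * t := mul_pos hb ht
  unfold heatKer
  have h1 : Real.exp (-z ^ 2 / (4 * (κ * η * t))) ≤ 1 := by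
    rw [Real.exp_le_one_iff]
    exact div_nonpos_of_nonpos_of_nonneg (neg_nonpos.mpr (by positivity)) (by positivity)
  have h2 : Real.exp (-(κ * η * a ^ 2 * t)) ≤ 1 := by
    rw [Real.exp_le_one_iff]
    have : (0:ℝ) ≤ κ * η * a ^ 2 * t :=
      mul_nonneg (mul_nonneg hb.le (sq_nonneg a)) ht.le
    linarith
  calc (Real.sqrt (κ * η * t))⁻¹ * Real.exp (-z ^ 2 / (4 * (κ * η * t))) *
        Real.exp (-(κ * η * a ^ 2 * t))
      ≤ (Real.sqrt (κ * η * t))⁻¹ * 1 * 1 := by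
        gcongr <;> positivity
    _ = (Real.sqrt (κ * η * t))⁻¹ := by ring

lemma mul_exp_neg_le_one {u : ℝ} (hu : 0 ≤ u) : u * Real.exp (-u) ≤ 1 := by
  rw [Real.exp_neg, ← div_eq_mul_inv, div_le_one (Real.exp_pos u)]
  linarith [Real.add_one_le_exp u]

lemma sq_mul_exp_le {r z : ℝ} (hr : 0 < r) : z^2 * Real.exp (-z^2/(4*r)) ≤ 4*r := by
  have hu : 0 ≤ z^2/(4*r) := by positivity
  have h := mul_exp_neg_le_one hu
  have heq : z^2 * Real.exp (-z^2/(4*r))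
      = 4*r * (z^2/(4*r) * Real.exp (-(z^2/(4*r)))) := by
    rw [show -z^2/(4*r) = -(z^2/(4*r)) by ring]
    field_simp
  rw [heq]
  nlinarith [Real.exp_pos (-(z^2/(4*r)))]

lemma abs_mul_exp_le {r z : ℝ} (hr : 0 < r) :
    |z| * Real.exp (-z^2/(4*r)) ≤ Real.sqrt (2*r) := by
  have hsq : (|z| * Real.exp (-z^2/(4*r)))^2 ≤ 2*r := by
    have heq : (|z| * Real.exp (-z^2/(4*r)))^2 = z^2 * Real.exp (-z^2/(4*(r/2))) := by
      rw [mul_pow, sq_abs, pow_two (Real.exp (-z^2/(4*r))), ← Real.exp_add]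
      congr 1
      ring
    rw [heq]
    have := sq_mul_exp_le (r := r/2) (z := z) (by positivity)
    linarith
  have h0 : 0 ≤ |z| * Real.exp (-z^2/(4*r)) := by positivity
  exact (Real.le_sqrt h0 (by positivity)).mpr hsq

lemma HKz_abs_le {κ η : ℝ} (a : ℝ) {t : ℝ} (z : ℝ) (hb : 0 < κ*η) (ht : 0 < t) :
    |HKz κ η a t z| ≤ Real.sqrt (2*(κ*η*t)) / (2*(κ*η*t)) * (Real.sqrt (κ*η*t))⁻¹ := by
  have hbt : (0:ℝ) < κ * η * t := mul_pos hb ht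
  have h1 : Real.exp (-(κ * η * a ^ 2 * t)) ≤ 1 := by
    rw [Real.exp_le_one_iff]
    have : (0:ℝ) ≤ κ * η * a ^ 2 * t :=
      mul_nonneg (mul_nonneg hb.le (sq_nonneg a)) ht.le
    linarith
  have heq : |HKz κ η a t z| = (|z| * Real.exp (-z ^ 2 / (4 * (κ * η * t)))) *
      Real.exp (-(κ * η * a ^ 2 * t)) * (Real.sqrt (κ*η*t))⁻¹ / (2*(κ*η*t)) := by
    unfold HKz heatKer
    rw [abs_mul, abs_div, abs_neg, abs_of_pos (show (0:ℝ) < 2*(κ*η*t) by positivity),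
      abs_of_pos (show (0:ℝ) < (Real.sqrt (κ*η*t))⁻¹ * Real.exp (-z ^ 2 / (4 * (κ * η * t))) *
        Real.exp (-(κ * η * a ^ 2 * t)) by positivity)]
    ring
  rw [heq]
  calc (|z| * Real.exp (-z ^ 2 / (4 * (κ * η * t)))) *
      Real.exp (-(κ * η * a ^ 2 * t)) * (Real.sqrt (κ*η*t))⁻¹ / (2*(κ*η*t))
      ≤ Real.sqrt (2*(κ*η*t)) * 1 * (Real.sqrt (κ*η*t))⁻¹ / (2*(κ*η*t)) := by
        gcongr ?_ * ?_ * ?_ / ?_ <;> first | exact abs_mul_exp_le hbt | exact le_rfl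
    _ = Real.sqrt (2*(κ*η*t)) / (2*(κ*η*t)) * (Real.sqrt (κ*η*t))⁻¹ := by ring

lemma HKzz_abs_le {κ η : ℝ} (a : ℝ) {t : ℝ} (z : ℝ) (hb : 0 < κ*η) (ht : 0 < t) :
    |HKzz κ η a t z| ≤ (2/(κ*η*t)) * (Real.sqrt (κ*η*t))⁻¹ := by
  have hbt : (0:ℝ) < κ * η * t := mul_pos hb ht
  have hE2 : Real.exp (-(κ * η * a ^ 2 * t)) ≤ 1 := by
    rw [Real.exp_le_one_iff]
    have : (0:ℝ) ≤ κ * η * a ^ 2 * t :=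
      mul_nonneg (mul_nonneg hb.le (sq_nonneg a)) ht.le
    linarith
  have hE1 : Real.exp (-z ^ 2 / (4 * (κ * η * t))) ≤ 1 := by
    rw [Real.exp_le_one_iff]
    exact div_nonpos_of_nonpos_of_nonneg (neg_nonpos.mpr (by positivity)) (by positivity)
  have hsplit : HKzz κ η a t z = -((2*(κ*η*t))⁻¹ * heatKer κ η a t z)
      + z^2/(4*(κ*η*t)^2) * heatKer κ η a t z := by
    unfold HKzz; ring
  have hH := heatKer_le (a := a) z hb ht
  have hHpos := heatKer_pos (κ := κ) (η := η) (a := a) (t := t) z hb ht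
  have h1 : |(2*(κ*η*t))⁻¹ * heatKer κ η a t z| ≤ (2*(κ*η*t))⁻¹ * (Real.sqrt (κ*η*t))⁻¹ := by
    rw [abs_of_pos (by positivity)]
    gcongr
  have h2 : |z^2/(4*(κ*η*t)^2) * heatKer κ η a t z|
      ≤ (κ*η*t)⁻¹ * (Real.sqrt (κ*η*t))⁻¹ := by
    rw [abs_of_nonneg (by positivity)]
    have heq : z^2/(4*(κ*η*t)^2) * heatKer κ η a t z
        = (z^2 * Real.exp (-z ^ 2 / (4 * (κ * η * t)))) * Real.exp (-(κ * η * a ^ 2 * t))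
          * (Real.sqrt (κ*η*t))⁻¹ / (4*(κ*η*t)^2) := by
      unfold heatKer; ring
    rw [heq]
    calc (z^2 * Real.exp (-z ^ 2 / (4 * (κ * η * t)))) * Real.exp (-(κ * η * a ^ 2 * t))
          * (Real.sqrt (κ*η*t))⁻¹ / (4*(κ*η*t)^2)
        ≤ (4*(κ*η*t)) * 1 * (Real.sqrt (κ*η*t))⁻¹ / (4*(κ*η*t)^2) := by
          gcongr ?_ * ?_ * ?_ / ?_ <;> first | exact sq_mul_exp_le hbt | exact le_rfl
      _ = (κ*η*t)⁻¹ * (Real.sqrt (κ*η*t))⁻¹ := by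
          field_simp
  calc |HKzz κ η a t z| ≤ |(2*(κ*η*t))⁻¹ * heatKer κ η a t z|
        + |z^2/(4*(κ*η*t)^2) * heatKer κ η a t z| := by
        rw [hsplit]
        exact (abs_add_le _ _).trans (by rw [abs_neg])
    _ ≤ (2*(κ*η*t))⁻¹ * (Real.sqrt (κ*η*t))⁻¹ + (κ*η*t)⁻¹ * (Real.sqrt (κ*η*t))⁻¹ :=
        add_le_add h1 h2
    _ ≤ (2/(κ*η*t)) * (Real.sqrt (κ*η*t))⁻¹ := by
        have : (2*(κ*η*t))⁻¹ + (κ*η*t)⁻¹ ≤ 2/(κ*η*t) := by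
          rw [mul_inv]
          rw [div_eq_mul_inv]
          nlinarith [inv_pos.mpr hbt]
        nlinarith [Real.sqrt_nonneg (κ*η*t), inv_nonneg.mpr (Real.sqrt_nonneg (κ*η*t))]

lemma HKt_abs_le {κ η : ℝ} (a : ℝ) {t : ℝ} (τ z : ℝ) (hb : 0 < κ*η) (ht : 0 < t)
    (hτ : t/2 < τ) :
    |HKt κ η a τ z| ≤ (3/t + κ*η*a^2) * (Real.sqrt (κ*η*(t/2)))⁻¹ := by
  have hτ0 : 0 < τ := lt_trans (by positivity) hτ
  have hbτ : (0:ℝ) < κ * η * τ := mul_pos hb hτ0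
  have hba : (0:ℝ) ≤ κ*η*a^2 := mul_nonneg hb.le (sq_nonneg a)
  have hE2 : Real.exp (-(κ * η * a ^ 2 * τ)) ≤ 1 := by
    rw [Real.exp_le_one_iff]
    have : (0:ℝ) ≤ κ * η * a ^ 2 * τ :=
      mul_nonneg (mul_nonneg hb.le (sq_nonneg a)) hτ0.le
    linarith
  have hH := heatKer_le (a := a) (t := τ) z hb hτ0
  have hHpos := heatKer_pos (κ := κ) (η := η) (a := a) (t := τ) z hb hτ0
  have hsplit : HKt κ η a τ z = (-((2*τ)⁻¹ + κ*η*a^2)) * heatKer κ η a τ z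
      + z^2/(4*(κ*η)*τ^2) * heatKer κ η a τ z := by
    unfold HKt; ring
  have h1 : |(-((2*τ)⁻¹ + κ*η*a^2)) * heatKer κ η a τ z|
      ≤ ((2*τ)⁻¹ + κ*η*a^2) * (Real.sqrt (κ*η*τ))⁻¹ := by
    rw [abs_mul, abs_neg, abs_of_nonneg (by positivity), abs_of_pos hHpos]
    gcongr
  have h2 : |z^2/(4*(κ*η)*τ^2) * heatKer κ η a τ z|
      ≤ τ⁻¹ * (Real.sqrt (κ*η*τ))⁻¹ := by
    rw [abs_of_nonneg (by positivity)]
    have heq : z^2/(4*(κ*η)*τ^2) * heatKer κ η a τ z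
        = (z^2 * Real.exp (-z ^ 2 / (4 * (κ * η * τ)))) * Real.exp (-(κ * η * a ^ 2 * τ))
          * (Real.sqrt (κ*η*τ))⁻¹ / (4*(κ*η)*τ^2) := by
      unfold heatKer; ring
    rw [heq]
    calc (z^2 * Real.exp (-z ^ 2 / (4 * (κ * η * τ)))) * Real.exp (-(κ * η * a ^ 2 * τ))
          * (Real.sqrt (κ*η*τ))⁻¹ / (4*(κ*η)*τ^2)
        ≤ (4*(κ*η*τ)) * 1 * (Real.sqrt (κ*η*τ))⁻¹ / (4*(κ*η)*τ^2) := by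
          gcongr ?_ * ?_ * ?_ / ?_ <;> first | exact sq_mul_exp_le hbτ | exact le_rfl
      _ = τ⁻¹ * (Real.sqrt (κ*η*τ))⁻¹ := by
          have hκ0 : κ ≠ 0 := by rintro rfl; simp at hb
          have hη0 : η ≠ 0 := by rintro rfl; simp at hb
          field_simp
  have hmain : |HKt κ η a τ z| ≤ ((2*τ)⁻¹ + τ⁻¹ + κ*η*a^2) * (Real.sqrt (κ*η*τ))⁻¹ := by
    calc |HKt κ η a τ z|
        ≤ |(-((2*τ)⁻¹ + κ*η*a^2)) * heatKer κ η a τ z|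
          + |z^2/(4*(κ*η)*τ^2) * heatKer κ η a τ z| := by
          rw [hsplit]; exact abs_add_le _ _
      _ ≤ ((2*τ)⁻¹ + κ*η*a^2) * (Real.sqrt (κ*η*τ))⁻¹ + τ⁻¹ * (Real.sqrt (κ*η*τ))⁻¹ :=
          add_le_add h1 h2
      _ = ((2*τ)⁻¹ + τ⁻¹ + κ*η*a^2) * (Real.sqrt (κ*η*τ))⁻¹ := by ring
  refine hmain.trans ?_
  have hsle : (Real.sqrt (κ*η*τ))⁻¹ ≤ (Real.sqrt (κ*η*(t/2)))⁻¹ := by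
    apply inv_anti₀ (Real.sqrt_pos.2 (by positivity))
    exact Real.sqrt_le_sqrt (by nlinarith)
  have hco : (2*τ)⁻¹ + τ⁻¹ + κ*η*a^2 ≤ 3/t + κ*η*a^2 := by
    have h2t : τ⁻¹ ≤ 2/t := by
      rw [show (2:ℝ)/t = (t/2)⁻¹ by rw [inv_div]]
      exact inv_anti₀ (by positivity) hτ.le
    have h2t' : (2*τ)⁻¹ ≤ 1/t := by
      rw [one_div]
      exact inv_anti₀ ht (by linarith)
    have hsum : (2*τ)⁻¹ + τ⁻¹ ≤ 3/t := by
      calc (2*τ)⁻¹ + τ⁻¹ ≤ 1/t + 2/t := add_le_add h2t' h2t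
        _ = 3/t := by ring
    linarith
  have h0 : (0:ℝ) ≤ (2*τ)⁻¹ + τ⁻¹ + κ*η*a^2 := by positivity
  exact mul_le_mul hco hsle (by positivity) (by positivity)

lemma heatKer_cont {κ η a t : ℝ} : Continuous (fun z => heatKer κ η a t z) := by
  unfold heatKer; fun_prop

lemma HKz_cont {κ η a t : ℝ} : Continuous (fun z => HKz κ η a t z) := by
  unfold HKz heatKer; fun_prop

lemma HKzz_cont {κ η a t : ℝ} : Continuous (fun z => HKzz κ η a t z) := by
  unfold HKzz heatKer; fun_prop

lemma HKt_cont {κ η a t : ℝ} : Continuous (fun z => HKt κ η a t z) := by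
  unfold HKt heatKer; fun_prop

lemma integrableOn_of_bound {f : ℝ → ℝ} {C c : ℝ} (hc : 0 < c)
    (hmeas : AEStronglyMeasurable f (volume.restrict (Ioi 0)))
    (hbound : ∀ y ∈ Ioi (0:ℝ), |f y| ≤ C * Real.exp (-c*y)) :
    IntegrableOn f (Ioi 0) := by
  apply Integrable.mono' ((exp_neg_integrableOn_Ioi 0 hc).const_mul C) hmeas
  rw [ae_restrict_iff' measurableSet_Ioi]
  exact ae_of_all _ (fun y hy => by simpa [Real.norm_eq_abs] using hbound y hy)

lemma dirichletKer_cont {κ η a τ x : ℝ} : Continuous (fun y => dirichletKer κ η a τ x y) := by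
  unfold dirichletKer heatKer; fun_prop

lemma HKt_diff_cont {κ η a τ x : ℝ} :
    Continuous (fun y => HKt κ η a τ (x - y) - HKt κ η a τ (x + y)) := by
  unfold HKt heatKer; fun_prop

lemma HKzz_diff_cont {κ η a τ x : ℝ} :
    Continuous (fun y => HKzz κ η a τ (x - y) - HKzz κ η a τ (x + y)) := by
  unfold HKzz heatKer; fun_prop

/-- Time derivative of the Dirichlet heat potential under the compatibility condition
(absence of an initial layer): if `g ∈ C²([0,∞))` with `g(0) = 0` and
`|g| + |g′| + |g″| ≤ M e^{−cy}`, then for `t > 0`, `x > 0`,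
`∂_t ∫₀^∞ G_D(t,x,y) g(y) dy = ∫₀^∞ G_D(t,x,y) κη (g″(y) − a² g(y)) dy`. -/
theorem dirichlet_potential_time_deriv (κ η : ℝ) (hκ : 0 < κ) (hη : 0 < η)
    (a : ℝ) (ha : 0 ≤ a) (g : ℝ → ℝ)
    (hg : ContDiffOn ℝ 2 g (Ici 0)) (hg0 : g 0 = 0)
    (M c : ℝ) (hM : 0 < M) (hc : 0 < c)
    (hbd : ∀ y ≥ (0 : ℝ),
      |g y| + |derivWithin g (Ici 0) y| +
          |derivWithin (derivWithin g (Ici 0)) (Ici 0) y| ≤ M * Real.exp (-c * y)) :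
    ∀ t > (0 : ℝ), ∀ x > (0 : ℝ),
      deriv (fun τ => ∫ y in Ioi (0 : ℝ), dirichletKer κ η a τ x y * g y) t =
        ∫ y in Ioi (0 : ℝ),
          dirichletKer κ η a t x y *
            (κ * η * (derivWithin (derivWithin g (Ici 0)) (Ici 0) y - a ^ 2 * g y)) := by
  intro t ht x hx
  have hb : (0:ℝ) < κ * η := mul_pos hκ hη
  have hbt : (0:ℝ) < κ * η * t := mul_pos hb ht
  set g1 := derivWithin g (Ici 0) with hg1def
  set g2 := derivWithin g1 (Ici 0) with hg2def
  -- regularity of g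
  have hg1C : ContDiffOn ℝ 1 g1 (Ici 0) :=
    hg.derivWithin (m := 1) (uniqueDiffOn_Ici 0) (by norm_num)
  have hgcont : ContinuousOn g (Ici 0) := hg.continuousOn
  have hg1cont : ContinuousOn g1 (Ici 0) := hg1C.continuousOn
  have hg2cont : ContinuousOn g2 (Ici 0) :=
    (hg1C.derivWithin (m := 0) (uniqueDiffOn_Ici 0) (by norm_num)).continuousOn
  -- pointwise bounds
  have hgb : ∀ y ≥ (0:ℝ), |g y| ≤ M * Real.exp (-c * y) := fun y hy => by
    have := hbd y hy; have := abs_nonneg (g1 y); have := abs_nonneg (g2 y); linarith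
  have hg1b : ∀ y ≥ (0:ℝ), |g1 y| ≤ M * Real.exp (-c * y) := fun y hy => by
    have := hbd y hy; have := abs_nonneg (g y); have := abs_nonneg (g2 y); linarith
  have hg2b : ∀ y ≥ (0:ℝ), |g2 y| ≤ M * Real.exp (-c * y) := fun y hy => by
    have := hbd y hy; have := abs_nonneg (g y); have := abs_nonneg (g1 y); linarith
  -- derivatives of g on Ioi 0
  have hgderiv : ∀ y ∈ Ioi (0:ℝ), HasDerivAt g (g1 y) y := by
    intro y hy
    have hmem : Ici (0:ℝ) ∈ 𝓝 y := Ici_mem_nhds hy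
    exact ((hg.differentiableOn (by norm_num) y (Ioi_subset_Ici_self hy)).hasDerivWithinAt).hasDerivAt hmem
  have hg1deriv : ∀ y ∈ Ioi (0:ℝ), HasDerivAt g1 (g2 y) y := by
    intro y hy
    have hmem : Ici (0:ℝ) ∈ 𝓝 y := Ici_mem_nhds hy
    exact ((hg1C.differentiableOn (by norm_num) y (Ioi_subset_Ici_self hy)).hasDerivWithinAt).hasDerivAt hmem
  -- abbreviations for kernel bounds at time t
  set s := (Real.sqrt (κ*η*t))⁻¹ with hsdef
  have hspos : 0 < s := inv_pos.mpr (Real.sqrt_pos.2 hbt)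
  have hGb : ∀ y : ℝ, |dirichletKer κ η a t x y| ≤ 2 * s := by
    intro y
    refine (abs_sub _ _).trans ?_
    have h1 := heatKer_le (a := a) (t := t) (x - y) hb ht
    have h2 := heatKer_le (a := a) (t := t) (x + y) hb ht
    have p1 := heatKer_pos (κ := κ) (η := η) (a := a) (t := t) (x - y) hb ht
    have p2 := heatKer_pos (κ := κ) (η := η) (a := a) (t := t) (x + y) hb ht
    rw [abs_of_pos p1, abs_of_pos p2]; linarith
  set Cz := Real.sqrt (2*(κ*η*t)) / (2*(κ*η*t)) * s with hCzdef
  have hCzpos : 0 ≤ Cz := by positivity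
  have hGyb : ∀ y : ℝ, |(-(HKz κ η a t (x - y)) - HKz κ η a t (x + y))| ≤ 2 * Cz := by
    intro y
    have h1 := HKz_abs_le (a := a) (t := t) (x - y) hb ht
    have h2 := HKz_abs_le (a := a) (t := t) (x + y) hb ht
    calc |(-(HKz κ η a t (x - y)) - HKz κ η a t (x + y))|
        ≤ |(-(HKz κ η a t (x - y)))| + |HKz κ η a t (x + y)| := abs_sub _ _
      _ = |HKz κ η a t (x - y)| + |HKz κ η a t (x + y)| := by rw [abs_neg]
      _ ≤ 2 * Cz := by rw [hCzdef, hsdef]; linarith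
  set Czz := (2/(κ*η*t)) * s with hCzzdef
  have hGyyb : ∀ y : ℝ, |HKzz κ η a t (x - y) - HKzz κ η a t (x + y)| ≤ 2 * Czz := by
    intro y
    have h1 := HKzz_abs_le (a := a) (t := t) (x - y) hb ht
    have h2 := HKzz_abs_le (a := a) (t := t) (x + y) hb ht
    refine (abs_sub _ _).trans ?_
    rw [hCzzdef, hsdef]; linarith
  -- measurability
  have hgm : AEStronglyMeasurable g (volume.restrict (Ioi 0)) :=
    (hgcont.mono Ioi_subset_Ici_self).aestronglyMeasurable measurableSet_Ioi
  have hg1m : AEStronglyMeasurable g1 (volume.restrict (Ioi 0)) :=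
    (hg1cont.mono Ioi_subset_Ici_self).aestronglyMeasurable measurableSet_Ioi
  have hg2m : AEStronglyMeasurable g2 (volume.restrict (Ioi 0)) :=
    (hg2cont.mono Ioi_subset_Ici_self).aestronglyMeasurable measurableSet_Ioi
  have hmeasG : ∀ τ : ℝ, AEStronglyMeasurable (fun y => dirichletKer κ η a τ x y * g y)
      (volume.restrict (Ioi 0)) := fun τ =>
    (dirichletKer_cont.aestronglyMeasurable.restrict).mul hgm
  -- constants
  have hba : (0:ℝ) ≤ κ*η*a^2 := mul_nonneg hb.le (sq_nonneg a)
  set K := (3/t + κ*η*a^2) * (Real.sqrt (κ*η*(t/2)))⁻¹ with hKdef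
  have hKnn : 0 ≤ K := by
    apply mul_nonneg _ (by positivity)
    have : (0:ℝ) ≤ 3/t := by positivity
    linarith
  -- Step A : differentiation under the integral sign
  have hA : HasDerivAt (fun τ => ∫ y in Ioi (0:ℝ), dirichletKer κ η a τ x y * g y)
      (∫ y in Ioi (0:ℝ), (HKt κ η a t (x - y) - HKt κ η a t (x + y)) * g y) t := by
    have key := hasDerivAt_integral_of_dominated_loc_of_deriv_le
      (μ := volume.restrict (Ioi 0))
      (F := fun τ y => dirichletKer κ η a τ x y * g y)
      (F' := fun τ y => (HKt κ η a τ (x - y) - HKt κ η a τ (x + y)) * g y)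
      (x₀ := t) (s := Metric.ball t (t/2)) (bound := fun y => (2*K*M) * Real.exp (-c*y))
      (Metric.ball_mem_nhds t (by positivity))
      (Filter.Eventually.of_forall hmeasG)
      (integrableOn_of_bound hc (hmeasG t) (fun y hy => by
        rw [abs_mul]
        calc |dirichletKer κ η a t x y| * |g y| ≤ (2*s) * (M * Real.exp (-c*y)) := by
              apply mul_le_mul (hGb y) (hgb y (le_of_lt hy)) (abs_nonneg _) (by positivity)
          _ = (2*s*M) * Real.exp (-c*y) := by ring))
      ((HKt_diff_cont.aestronglyMeasurable.restrict).mul hgm)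
      (by
        rw [ae_restrict_iff' measurableSet_Ioi]
        refine ae_of_all _ (fun y hy τ hτ => ?_)
        have hdist : |τ - t| < t/2 := by
          have := Metric.mem_ball.mp hτ
          rwa [Real.dist_eq] at this
        have hτ2 : t/2 < τ := by
          rcases abs_lt.mp hdist with ⟨h1, h2⟩; linarith
        have b1 := HKt_abs_le (a := a) (t := t) τ (x - y) hb ht hτ2
        have b2 := HKt_abs_le (a := a) (t := t) τ (x + y) hb ht hτ2
        have hgy := hgb y (le_of_lt hy)
        rw [Real.norm_eq_abs, abs_mul]
        calc |HKt κ η a τ (x - y) - HKt κ η a τ (x + y)| * |g y|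
            ≤ (2*K) * (M * Real.exp (-c*y)) := by
              apply mul_le_mul _ hgy (abs_nonneg _) (by positivity)
              refine (abs_sub _ _).trans ?_
              rw [hKdef]; linarith
          _ = (2*K*M) * Real.exp (-c*y) := by ring)
      (((exp_neg_integrableOn_Ioi 0 hc).const_mul _))
      (by
        refine ae_of_all _ (fun y τ hτ => ?_)
        have hdist : |τ - t| < t/2 := by
          have := Metric.mem_ball.mp hτ
          rwa [Real.dist_eq] at this
        have hτpos : 0 < τ := by
          rcases abs_lt.mp hdist with ⟨h1, h2⟩; linarith
        have h := ((heatKer_hasDerivAt_t a (x - y) hb hτpos).sub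
          (heatKer_hasDerivAt_t a (x + y) hb hτpos)).mul_const (g y)
        simpa [dirichletKer, HKt] using h)
    exact key.2
  -- Step B : integration by parts in y
  have hGycont : Continuous (fun y => -(HKz κ η a t (x - y)) - HKz κ η a t (x + y)) := by
    unfold HKz heatKer; fun_prop
  set F : ℝ → ℝ := fun y => (-(HKz κ η a t (x - y)) - HKz κ η a t (x + y)) * g y
      - dirichletKer κ η a t x y * g1 y with hFdef
  set P : ℝ → ℝ := fun y => (HKzz κ η a t (x - y) - HKzz κ η a t (x + y)) * g y
      - dirichletKer κ η a t x y * g2 y with hPdef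
  have hPint : IntegrableOn P (Ioi 0) := by
    apply integrableOn_of_bound (C := 2*Czz*M + 2*s*M) hc
    · exact ((HKzz_diff_cont.aestronglyMeasurable.restrict).mul hgm).sub
        ((dirichletKer_cont.aestronglyMeasurable.restrict).mul hg2m)
    · intro y hy
      have h1 : |(HKzz κ η a t (x - y) - HKzz κ η a t (x + y)) * g y|
          ≤ 2*Czz * (M * Real.exp (-c*y)) := by
        rw [abs_mul]
        exact mul_le_mul (hGyyb y) (hgb y (le_of_lt hy)) (abs_nonneg _)
          (by positivity)
      have h2 : |dirichletKer κ η a t x y * g2 y| ≤ 2*s * (M * Real.exp (-c*y)) := by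
        rw [abs_mul]
        exact mul_le_mul (hGb y) (hg2b y (le_of_lt hy)) (abs_nonneg _) (by positivity)
      calc |P y| ≤ |(HKzz κ η a t (x - y) - HKzz κ η a t (x + y)) * g y|
            + |dirichletKer κ η a t x y * g2 y| := abs_sub _ _
        _ ≤ 2*Czz * (M * Real.exp (-c*y)) + 2*s * (M * Real.exp (-c*y)) := add_le_add h1 h2
        _ = (2*Czz*M + 2*s*M) * Real.exp (-c*y) := by ring
  have hFcont : ContinuousWithinAt F (Ici 0) 0 := by
    have : ContinuousOn F (Ici 0) :=
      (hGycont.continuousOn.mul hgcont).sub (dirichletKer_cont.continuousOn.mul hg1cont)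
    exact this 0 self_mem_Ici
  have hFderiv : ∀ y ∈ Ioi (0:ℝ), HasDerivAt F (P y) y := by
    intro y hy
    have hu1 : HasDerivAt (fun y : ℝ => x - y) (-1) y := by
      simpa using (hasDerivAt_id y).const_sub x
    have hu2 : HasDerivAt (fun y : ℝ => x + y) 1 y := by
      simpa using (hasDerivAt_id y).const_add x
    have hG' : HasDerivAt (fun y => dirichletKer κ η a t x y)
        (-(HKz κ η a t (x - y)) - HKz κ η a t (x + y)) y := by
      have h1 := (heatKer_hasDerivAt_z a (x - y) hb ht).comp y hu1
      have h2 := (heatKer_hasDerivAt_z a (x + y) hb ht).comp y hu2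
      have h := h1.sub h2
      have : HasDerivAt (fun y => heatKer κ η a t (x - y) - heatKer κ η a t (x + y))
          (HKz κ η a t (x - y) * (-1) - HKz κ η a t (x + y) * 1) y := h
      simpa [dirichletKer, mul_neg_one, mul_one, sub_eq_add_neg] using this
    have hGy' : HasDerivAt (fun y => -(HKz κ η a t (x - y)) - HKz κ η a t (x + y))
        (HKzz κ η a t (x - y) - HKzz κ η a t (x + y)) y := by
      have h1 := ((HKz_hasDerivAt_z a (x - y) hb ht).comp y hu1).neg
      have h2 := (HKz_hasDerivAt_z a (x + y) hb ht).comp y hu2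
      have h := h1.sub h2
      have : HasDerivAt (fun y => -(HKz κ η a t (x - y)) - HKz κ η a t (x + y))
          (-(HKzz κ η a t (x - y) * (-1)) - HKzz κ η a t (x + y) * 1) y := h
      simpa [mul_neg_one, mul_one] using this
    have hF' := (hGy'.mul (hgderiv y hy)).sub (hG'.mul (hg1deriv y hy))
    refine hF'.congr_deriv ?_
    simp only [hPdef]
    ring
  have hFtop : Tendsto F atTop (𝓝 0) := by
    have h1 : Tendsto (fun y : ℝ => c*y) atTop atTop :=
      Tendsto.const_mul_atTop hc tendsto_id
    have h2 : Tendsto (fun y : ℝ => Real.exp (-(c*y))) atTop (𝓝 0) :=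
      Real.tendsto_exp_neg_atTop_nhds_zero.comp h1
    have h3 : Tendsto (fun y : ℝ => (2*Cz*M + 2*s*M) * Real.exp (-(c*y))) atTop (𝓝 0) := by
      simpa using h2.const_mul (2*Cz*M + 2*s*M)
    apply squeeze_zero_norm' _ h3
    filter_upwards [eventually_ge_atTop (0:ℝ)] with y hy
    have hA1 : |(-(HKz κ η a t (x - y)) - HKz κ η a t (x + y)) * g y|
        ≤ 2*Cz * (M * Real.exp (-c*y)) := by
      rw [abs_mul]
      exact mul_le_mul (hGyb y) (hgb y hy) (abs_nonneg _) (by positivity)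
    have hA2 : |dirichletKer κ η a t x y * g1 y| ≤ 2*s * (M * Real.exp (-c*y)) := by
      rw [abs_mul]
      exact mul_le_mul (hGb y) (hg1b y hy) (abs_nonneg _) (by positivity)
    have : |F y| ≤ 2*Cz * (M * Real.exp (-c*y)) + 2*s * (M * Real.exp (-c*y)) :=
      (abs_sub _ _).trans (add_le_add hA1 hA2)
    rw [Real.norm_eq_abs]
    calc |F y| ≤ 2*Cz * (M * Real.exp (-c*y)) + 2*s * (M * Real.exp (-c*y)) := this
      _ = (2*Cz*M + 2*s*M) * Real.exp (-(c*y)) := by rw [neg_mul]; ring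
  have hF0 : F 0 = 0 := by
    simp [hFdef, hg0, dirichletKer]
  have hIBP : ∫ y in Ioi (0:ℝ), P y = 0 := by
    rw [integral_Ioi_of_hasDerivAt_of_tendsto hFcont hFderiv hPint hFtop, hF0, sub_zero]
  -- assembly
  have hQint : IntegrableOn
      (fun y => dirichletKer κ η a t x y * (κ*η*(g2 y - a^2*g y))) (Ioi 0) := by
    apply integrableOn_of_bound (C := 2*s*(κ*η*(1+a^2)*M)) hc
    · exact (dirichletKer_cont.aestronglyMeasurable.restrict).mul
        ((hg2m.sub (hgm.const_mul (a^2))).const_mul (κ*η))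
    · intro y hy
      rw [abs_mul]
      have hin : |κ*η*(g2 y - a^2*g y)| ≤ κ*η*(1+a^2)*M * Real.exp (-c*y) := by
        rw [abs_mul, abs_of_pos hb]
        have : |g2 y - a^2*g y| ≤ (1+a^2) * (M * Real.exp (-c*y)) := by
          refine (abs_sub _ _).trans ?_
          have h1 := hg2b y (le_of_lt hy)
          have h2 : |a^2 * g y| ≤ a^2 * (M * Real.exp (-c*y)) := by
            rw [abs_mul, abs_of_nonneg (sq_nonneg a)]
            exact mul_le_mul_of_nonneg_left (hgb y (le_of_lt hy)) (sq_nonneg a)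
          nlinarith [abs_nonneg (g2 y)]
        calc κ*η * |g2 y - a^2*g y| ≤ κ*η * ((1+a^2) * (M * Real.exp (-c*y))) :=
              mul_le_mul_of_nonneg_left this hb.le
          _ = κ*η*(1+a^2)*M * Real.exp (-c*y) := by ring
      calc |dirichletKer κ η a t x y| * |κ*η*(g2 y - a^2*g y)|
          ≤ (2*s) * (κ*η*(1+a^2)*M * Real.exp (-c*y)) := by
            apply mul_le_mul (hGb y) hin (abs_nonneg _) (by positivity)
        _ = 2*s*(κ*η*(1+a^2)*M) * Real.exp (-c*y) := by ring
  have key : (fun y => (HKt κ η a t (x - y) - HKt κ η a t (x + y)) * g y)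
      = fun y => κ*η * P y + dirichletKer κ η a t x y * (κ*η*(g2 y - a^2*g y)) := by
    funext y
    rw [HKt_eq a (x - y) hb ht, HKt_eq a (x + y) hb ht]
    simp only [hPdef, dirichletKer]
    ring
  rw [hA.deriv, key, integral_add (hPint.const_mul (κ*η)) hQint,
    MeasureTheory.integral_const_mul, hIBP, mul_zero, zero_add]
end
end
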